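/- arXiv:2601.12048 — 3 statements merged into one kernel-verified Lean document; each statement's English description precedes it below -/
import Mathlib

section
/- For every integer r ≥ 2, the generating series S_{3,b} of the 3-colored partitions of type 3.b satisfies S_{3,b} = H² (q)_{r−1}/(q)_1 − H/(q)_1. -/
open PowerSeries Finset

/-- `l` is (the list of parts, in non-increasing order, of) an integer partition. -/
def IsPtn (l : List ℕ) : Prop := l.Pairwise (· ≥ ·) ∧ ∀ x ∈ l, 0 < x

/-- the smallest part of a partition (listed in non-increasing order). -/
def Kpart (l : List ℕ) : ℕ := l.getD (l.length - 1) 0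

/-- the `k`-th smallest part of a partition (listed in non-increasing order). -/
def Ikpart (l : List ℕ) (k : ℕ) : ℕ := l.getD (l.length - k) 0

/-- `H`, the generating series of the partition function. -/
noncomputable def Hq : PowerSeries ℚ :=
  PowerSeries.mk fun n => (Set.ncard {l : List ℕ | IsPtn l ∧ l.sum = n} : ℚ)

/-- `(q)_n = (1−q)(1−q²)⋯(1−qⁿ)`, with `(q)_0 = 1`. -/
noncomputable def qPoch (n : ℕ) : PowerSeries ℚ :=
  ∏ j ∈ Finset.range n, (1 - (X : PowerSeries ℚ) ^ (j + 1))

/-- generating series counting 3-colored partitions (triples of partitions) satisfying `P`,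
by total size. -/
noncomputable def cseries (P : List ℕ → List ℕ → List ℕ → Prop) : PowerSeries ℚ :=
  PowerSeries.mk fun n =>
    (Set.ncard {t : List ℕ × List ℕ × List ℕ |
        P t.1 t.2.1 t.2.2 ∧ t.1.sum + t.2.1.sum + t.2.2.sum = n} : ℚ)

/-- type 3.b: black and red parts non-empty, no green parts, `ℓ_r ≥ k` and `k + i_k ≥ r`. -/
def Type3b (r : ℕ) (b rd g : List ℕ) : Prop :=
  IsPtn b ∧ IsPtn rd ∧ IsPtn g ∧ b ≠ [] ∧ rd ≠ [] ∧ g = [] ∧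
    Kpart b ≤ rd.length ∧ r ≤ Kpart b + Ikpart rd (Kpart b)


section GSer

variable {α : Type*} {β : Type*}

/-- level set of a size function on a set -/
def Lev (σ : α → ℕ) (U : Set α) (n : ℕ) : Set α := {x ∈ U | σ x = n}

def FinLev (σ : α → ℕ) (U : Set α) : Prop := ∀ n, (Lev σ U n).Finite

/-- generic counting series -/
noncomputable def gser (σ : α → ℕ) (U : Set α) : PowerSeries ℚ :=
  PowerSeries.mk fun n => ((Lev σ U n).ncard : ℚ)

lemma coeff_gser (σ : α → ℕ) (U : Set α) (n : ℕ) :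
    (coeff n) (gser σ U) = ((Lev σ U n).ncard : ℚ) := coeff_mk _ _

lemma ncard_eq_sum_fiber {ι : Type*} [DecidableEq ι] (S : Set α) (hS : S.Finite)
    (c : α → ι) (D : Finset ι) (hc : ∀ x ∈ S, c x ∈ D) :
    S.ncard = ∑ j ∈ D, ({x ∈ S | c x = j}).ncard := by
  classical
  rw [Set.ncard_eq_toFinset_card S hS]
  rw [Finset.card_eq_sum_card_fiberwise (f := c) (t := D)
    (by intro x hx; exact hc x (hS.mem_toFinset.mp hx))]
  refine Finset.sum_congr rfl fun j _ => ?_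
  have : {x ∈ S | c x = j} = ↑(hS.toFinset.filter (fun a => c a = j)) := by
    ext x; simp [Set.Finite.mem_toFinset]
  rw [this, Set.ncard_coe_finset]

lemma ncard_prod (A : Set α) (B : Set β) : (A ×ˢ B).ncard = A.ncard * B.ncard := by
  have h := Nat.card_congr (Equiv.Set.prod A B)
  rw [Nat.card_prod] at h
  simpa [Nat.card_coe_set_eq] using h

lemma FinLev.prod {σ : α → ℕ} {τ : β → ℕ} {U : Set α} {V : Set β}
    (hU : FinLev σ U) (hV : FinLev τ V) :
    FinLev (fun p : α × β => σ p.1 + τ p.2) (U ×ˢ V) := by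
  intro n
  apply Set.Finite.subset (Set.Finite.prod
    (Set.Finite.biUnion (Set.finite_Iic n) (fun m _ => hU m))
    (Set.Finite.biUnion (Set.finite_Iic n) (fun m _ => hV m)))
  rintro ⟨x, y⟩ ⟨⟨hx, hy⟩, hs⟩
  have hs' : σ x + τ y = n := hs
  constructor
  · refine Set.mem_biUnion (x := σ x) (Set.mem_Iic.mpr (by omega)) ⟨hx, rfl⟩
  · refine Set.mem_biUnion (x := τ y) (Set.mem_Iic.mpr (by omega)) ⟨hy, rfl⟩

lemma gser_mul {σ : α → ℕ} {τ : β → ℕ} {U : Set α} {V : Set β}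
    (hU : FinLev σ U) (hV : FinLev τ V) :
    gser σ U * gser τ V = gser (fun p : α × β => σ p.1 + τ p.2) (U ×ˢ V) := by
  ext n
  rw [coeff_mul, coeff_gser]
  rw [ncard_eq_sum_fiber _ (FinLev.prod hU hV n) (fun p => (σ p.1, τ p.2))
    (Finset.HasAntidiagonal.antidiagonal n) (by rintro ⟨x, y⟩ ⟨-, hs⟩; simpa using hs)]
  push_cast
  refine Finset.sum_congr rfl ?_
  rintro ⟨u, v⟩ huv
  rw [Finset.HasAntidiagonal.mem_antidiagonal] at huv
  have : {p ∈ Lev (fun p : α × β => σ p.1 + τ p.2) (U ×ˢ V) n |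
      (fun p : α × β => (σ p.1, τ p.2)) p = (u, v)} = (Lev σ U u) ×ˢ (Lev τ V v) := by
    ext ⟨x, y⟩
    simp only [Lev, Set.mem_setOf_eq, Set.mem_prod, Prod.mk.injEq]
    constructor
    · rintro ⟨⟨⟨hx, hy⟩, -⟩, h1, h2⟩; exact ⟨⟨hx, h1⟩, hy, h2⟩
    · rintro ⟨⟨hx, h1⟩, hy, h2⟩; exact ⟨⟨⟨hx, hy⟩, by omega⟩, h1, h2⟩
  rw [this, ncard_prod, coeff_gser, coeff_gser]
  push_cast
  ring

lemma coeff_gser_strat {ι : Type*} [DecidableEq ι] {σ : α → ℕ} {U : Set α}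
    (hU : FinLev σ U) (c : α → ι) (D : Finset ι) {n : ℕ}
    (hc : ∀ x ∈ Lev σ U n, c x ∈ D) :
    (coeff n) (gser σ U) = ∑ j ∈ D, (coeff n) (gser σ (U ∩ {x | c x = j})) := by
  rw [coeff_gser, ncard_eq_sum_fiber _ (hU n) c D hc]
  push_cast
  refine Finset.sum_congr rfl fun j _ => ?_
  rw [coeff_gser]
  congr 2
  ext x
  simp only [Lev, Set.mem_setOf_eq, Set.mem_inter_iff]
  tauto

lemma gser_shift {σ : α → ℕ} {τ : β → ℕ} {U : Set α} {V : Set β} (c : ℕ) (f : β → α)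
    (hmap : ∀ y ∈ V, f y ∈ U) (hinj : Set.InjOn f V)
    (hsurj : ∀ x ∈ U, ∃ y ∈ V, f y = x)
    (hσ : ∀ y ∈ V, σ (f y) = τ y + c) :
    gser σ U = X ^ c * gser τ V := by
  ext n
  rw [coeff_gser]
  rcases le_or_gt c n with hcn | hcn
  · obtain ⟨d, rfl⟩ : ∃ d, n = d + c := ⟨n - c, by omega⟩
    rw [coeff_X_pow_mul, coeff_gser]
    have himg : Lev σ U (d + c) = f '' (Lev τ V d) := by
      ext x
      constructor
      · rintro ⟨hx, hs⟩
        obtain ⟨y, hy, rfl⟩ := hsurj x hx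
        exact ⟨y, ⟨hy, by have := hσ y hy; omega⟩, rfl⟩
      · rintro ⟨y, ⟨hy, hs⟩, rfl⟩
        exact ⟨hmap y hy, by have := hσ y hy; omega⟩
    rw [himg, Set.ncard_image_of_injOn (Set.InjOn.mono (fun y hy => hy.1) hinj)]
  · have hemp : Lev σ U n = ∅ := by
      ext x
      simp only [Lev, Set.mem_setOf_eq, Set.mem_empty_iff_false, iff_false, not_and]
      intro hx hs
      obtain ⟨y, hy, rfl⟩ := hsurj x hx
      have := hσ y hy; omega
    rw [hemp, Set.ncard_empty]
    have : (coeff n) (X ^ c * gser τ V) = 0 := by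
      rw [coeff_mul]
      apply Finset.sum_eq_zero
      rintro ⟨u, v⟩ huv
      rw [Finset.HasAntidiagonal.mem_antidiagonal] at huv
      rw [coeff_X_pow]
      have : ¬ (u = c) := by omega
      simp [this]
    rw [this]
    norm_num

lemma gser_union {σ : α → ℕ} {U U₁ U₂ : Set α}
    (h : U = U₁ ∪ U₂) (hdis : Disjoint U₁ U₂) (h1 : FinLev σ U₁) (h2 : FinLev σ U₂) :
    gser σ U = gser σ U₁ + gser σ U₂ := by
  ext n
  rw [map_add, coeff_gser, coeff_gser, coeff_gser]
  have : Lev σ U n = Lev σ U₁ n ∪ Lev σ U₂ n := by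
    subst h; ext x; simp only [Lev, Set.mem_setOf_eq, Set.mem_union]; tauto
  rw [this, Set.ncard_union_eq (by
    refine Set.disjoint_left.mpr ?_
    intro x hx1 hx2
    exact Set.disjoint_left.mp hdis hx1.1 hx2.1) (h1 n) (h2 n)]
  push_cast; ring

lemma FinLev.subset {σ : α → ℕ} {U V : Set α} (hV : FinLev σ V) (h : U ⊆ V) :
    FinLev σ U := fun n => (hV n).subset (fun x hx => ⟨h hx.1, hx.2⟩)

end GSer


section Lists

lemma sorted_last_le {l : List ℕ} (hs : l.Pairwise (· ≥ ·)) (h : l ≠ []) :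
    ∀ x ∈ l, l.getLast h ≤ x := by
  intro x hx
  obtain ⟨i, hi⟩ := List.mem_iff_get.mp hx
  rw [List.getLast_eq_getElem]
  subst hi
  refine hs.rel_get_of_le (Fin.mk_le_mk.mpr ?_)
  have := i.isLt
  omega

lemma Kpart_eq_getLast {l : List ℕ} (h : l ≠ []) : Kpart l = l.getLast h := by
  have hlen : l.length ≠ 0 := fun hh => h (List.length_eq_zero_iff.mp hh)
  rw [List.getLast_eq_getElem, Kpart, List.getD_eq_getElem _ _ (by omega)]

lemma Kpart_concat (l : List ℕ) (k : ℕ) : Kpart (l ++ [k]) = k := by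
  rw [Kpart_eq_getLast (by simp)]
  simp [List.getLast_append]

lemma Ikpart_concat (δ γ : List ℕ) (i : ℕ) :
    Ikpart (δ ++ i :: γ) (γ.length + 1) = i := by
  have hlen : (δ ++ i :: γ).length = δ.length + γ.length + 1 := by
    simp
    omega
  rw [Ikpart, hlen]
  have h1 : δ.length + γ.length + 1 - (γ.length + 1) = δ.length := by omega
  rw [h1, List.getD_eq_getElem _ _ (by rw [hlen]; omega)]
  rw [List.getElem_append_right (le_refl _)]
  simp

end Lists

section Fin

lemma ptn_sorted_eq_sort {l : List ℕ} (hs : l.Pairwise (· ≥ ·)) :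
    l = Multiset.sort (↑l : Multiset ℕ) (· ≥ ·) := by
  apply List.Perm.eq_of_pairwise' hs (Multiset.pairwise_sort _ _)
  exact (Multiset.coe_eq_coe.mp (Multiset.sort_eq (↑l : Multiset ℕ) (· ≥ ·))).symm

lemma finite_ptn_sum_le (n : ℕ) : {l : List ℕ | IsPtn l ∧ l.sum ≤ n}.Finite := by
  apply Set.Finite.subset (Set.Finite.biUnion (Set.finite_Iic n)
    (fun m _ => Set.Finite.image (fun p : Nat.Partition m => Multiset.sort p.parts (· ≥ ·))
      (Set.finite_univ)))
  rintro l ⟨⟨hs, hp⟩, hle⟩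
  refine Set.mem_biUnion (x := l.sum) (Set.mem_Iic.mpr hle) ?_
  refine ⟨⟨(↑l : Multiset ℕ), by intro x hx; exact hp x (by simpa using hx), by simp⟩, Set.mem_univ _, ?_⟩
  exact (ptn_sorted_eq_sort hs).symm

end Fin

section Series

def PGE (j : ℕ) : Set (List ℕ) := {l | IsPtn l ∧ ∀ x ∈ l, j ≤ x}
def PEX (a i : ℕ) : Set (List ℕ) := {l | IsPtn l ∧ l.length = a ∧ ∀ x ∈ l, x ≤ i}

noncomputable def SGge (j : ℕ) : PowerSeries ℚ := gser List.sum (PGE j)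
noncomputable def SEx (a i : ℕ) : PowerSeries ℚ := gser List.sum (PEX a i)

lemma finLev_PGE (j : ℕ) : FinLev List.sum (PGE j) := by
  intro n
  apply (finite_ptn_sum_le n).subset
  rintro l ⟨⟨hp, _⟩, hs⟩
  exact ⟨hp, le_of_eq hs⟩

lemma finLev_PEX (a i : ℕ) : FinLev List.sum (PEX a i) := by
  intro n
  apply (finite_ptn_sum_le n).subset
  rintro l ⟨⟨hp, _, _⟩, hs⟩
  exact ⟨hp, le_of_eq hs⟩

lemma Hq_eq : Hq = gser List.sum {l | IsPtn l} := rfl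

lemma SGge_one : SGge 1 = Hq := by
  have hset : PGE 1 = {l | IsPtn l} := by
    ext l
    simp only [PGE, Set.mem_setOf_eq, and_iff_left_iff_imp]
    exact fun hp x hx => hp.2 x hx
  rw [SGge, hset, Hq_eq]

lemma qPoch_succ (m : ℕ) : qPoch (m + 1) = qPoch m * (1 - X ^ (m + 1)) := by
  rw [qPoch, qPoch, Finset.prod_range_succ]

lemma SGge_rec (j : ℕ) (hj : 1 ≤ j) : SGge j = SGge (j + 1) + X ^ j * SGge j := by
  have hshift : gser List.sum {l ∈ PGE j | j ∈ l} = X ^ j * gser List.sum (PGE j) := by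
    apply gser_shift (τ := List.sum) (V := PGE j) j (fun l => l ++ [j])
    · rintro l ⟨⟨hs, hpos⟩, hge⟩
      refine ⟨⟨⟨?_, ?_⟩, ?_⟩, by simp⟩
      · refine List.pairwise_append.mpr ⟨hs, List.pairwise_singleton _ _, ?_⟩
        intro x hx y hy
        rw [List.mem_singleton] at hy
        subst hy
        exact hge x hx
      · intro x hx
        rcases List.mem_append.mp hx with h | h
        · exact hpos x h
        · rw [List.mem_singleton] at h; omega
      · intro x hx
        rcases List.mem_append.mp hx with h | h
        · exact hge x h
        · rw [List.mem_singleton] at h; omega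
    · intro l₁ _ l₂ _ h
      simpa using h
    · rintro x ⟨⟨⟨hs, hpos⟩, hge⟩, hmem⟩
      have hne : x ≠ [] := List.ne_nil_of_mem hmem
      have hlast : x.getLast hne = j :=
        le_antisymm (sorted_last_le hs hne j hmem) (hge _ (List.getLast_mem hne))
      refine ⟨x.dropLast, ⟨⟨hs.sublist (List.dropLast_sublist x), ?_⟩, ?_⟩, ?_⟩
      · exact fun y hy => hpos y ((List.dropLast_sublist x).subset hy)
      · exact fun y hy => hge y ((List.dropLast_sublist x).subset hy)
      · rw [← hlast]
        exact List.dropLast_append_getLast hne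
    · intro l _
      simp
  have hun : gser List.sum (PGE j) =
      gser List.sum (PGE (j + 1)) + gser List.sum {l ∈ PGE j | j ∈ l} := by
    apply gser_union
    · ext l
      simp only [PGE, Set.mem_setOf_eq, Set.mem_union]
      constructor
      · rintro ⟨hp, hge⟩
        by_cases hj' : j ∈ l
        · exact Or.inr ⟨⟨hp, hge⟩, hj'⟩
        · refine Or.inl ⟨hp, fun x hx => ?_⟩
          have := hge x hx
          rcases Nat.lt_or_ge j x with h | h
          · omega
          · exact absurd (by omega : x = j) (fun hh => hj' (hh ▸ hx))
      · rintro (⟨hp, hge⟩ | ⟨⟨hp, hge⟩, _⟩)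
        · exact ⟨hp, fun x hx => le_trans (by omega) (hge x hx)⟩
        · exact ⟨hp, hge⟩
    · refine Set.disjoint_left.mpr ?_
      rintro l ⟨hp, hge⟩ ⟨-, hmem⟩
      have := hge j hmem
      omega
    · exact finLev_PGE _
    · exact (finLev_PGE j).subset (fun l hl => hl.1)
  show gser List.sum (PGE j) = gser List.sum (PGE (j + 1)) + X ^ j * gser List.sum (PGE j)
  conv_lhs => rw [hun, hshift]

lemma SGge_closed (k : ℕ) : Hq * qPoch k = SGge (k + 1) := by
  induction k with
  | zero => simp [qPoch, SGge_one]
  | succ m ih =>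
      have hrec := SGge_rec (m + 1) (by omega)
      rw [qPoch_succ]
      linear_combination (1 - X ^ (m + 1)) * ih + hrec

lemma sum_pos_ne_nil {l : List ℕ} (hpos : ∀ x ∈ l, 0 < x) (h : l.sum ≠ 0) : True := trivial

lemma ptn_sum_zero {l : List ℕ} (hpos : ∀ x ∈ l, 0 < x) (hs : l.sum = 0) : l = [] := by
  cases l with
  | nil => rfl
  | cons a t =>
      have := hpos a (by simp)
      simp only [List.sum_cons] at hs
      omega

lemma coeff_SGge_zero (j : ℕ) : (coeff 0) (SGge j) = 1 := by
  rw [SGge, coeff_gser]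
  have : Lev List.sum (PGE j) 0 = {[]} := by
    ext l
    simp only [Lev, PGE, Set.mem_setOf_eq, Set.mem_singleton_iff]
    constructor
    · rintro ⟨⟨⟨-, hpos⟩, -⟩, hs⟩
      exact ptn_sum_zero hpos hs
    · rintro rfl
      exact ⟨⟨⟨List.Pairwise.nil, by simp⟩, by simp⟩, rfl⟩
  rw [this, Set.ncard_singleton]
  norm_num

lemma coeff_SGge_low (j m : ℕ) (h1 : 1 ≤ m) (h2 : m < j) : (coeff m) (SGge j) = 0 := by
  rw [SGge, coeff_gser]
  have : Lev List.sum (PGE j) m = ∅ := by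
    ext l
    simp only [Lev, PGE, Set.mem_setOf_eq, Set.mem_empty_iff_false, iff_false, not_and]
    rintro ⟨⟨-, hpos⟩, hge⟩ hs
    have hne : l ≠ [] := by
      intro h
      subst h
      simp at hs
      omega
    obtain ⟨a, ha⟩ := List.exists_mem_of_ne_nil l hne
    have h3 := hge a ha
    have h4 := List.single_le_sum (fun x _ => Nat.zero_le x) a ha
    omega
  rw [this, Set.ncard_empty]
  norm_num

lemma SEx_zero (i : ℕ) : SEx 0 i = 1 := by
  ext n
  rw [SEx, coeff_gser, coeff_one]
  have : Lev List.sum (PEX 0 i) n = if n = 0 then {[]} else ∅ := by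
    split_ifs with h
    · subst h
      ext l
      simp only [Lev, PEX, Set.mem_setOf_eq, Set.mem_singleton_iff]
      constructor
      · rintro ⟨⟨-, hlen, -⟩, -⟩
        exact List.length_eq_zero_iff.mp hlen
      · rintro rfl
        exact ⟨⟨⟨List.Pairwise.nil, by simp⟩, rfl, by simp⟩, rfl⟩
    · ext l
      simp only [Lev, PEX, Set.mem_setOf_eq, Set.mem_empty_iff_false, iff_false, not_and]
      rintro ⟨-, hlen, -⟩ hs
      have : l = [] := List.length_eq_zero_iff.mp hlen
      subst this
      simp at hs
      omega
  split_ifs with h <;> rw [this] <;> simp [h, Set.ncard_singleton]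

lemma sorted_replicate (a x : ℕ) : (List.replicate a x).Pairwise (· ≥ ·) := by
  induction a with
  | zero => exact List.Pairwise.nil
  | succ m ih =>
      rw [List.replicate_succ, List.pairwise_cons]
      exact ⟨fun b hb => le_of_eq (List.eq_of_mem_replicate hb), ih⟩

lemma SEx_one_col (a : ℕ) : SEx a 1 = X ^ a := by
  ext n
  rw [SEx, coeff_gser, coeff_X_pow]
  have : Lev List.sum (PEX a 1) n = if n = a then {List.replicate a 1} else ∅ := by
    split_ifs with h
    · ext l
      simp only [Lev, PEX, Set.mem_setOf_eq, Set.mem_singleton_iff]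
      constructor
      · rintro ⟨⟨⟨-, hpos⟩, hlen, hbd⟩, hs⟩
        exact List.eq_replicate_iff.mpr ⟨hlen, fun b hb => by
          have := hpos b hb; have := hbd b hb; omega⟩
      · rintro rfl
        refine ⟨⟨⟨sorted_replicate a 1, fun x hx => ?_⟩, by simp, fun x hx => ?_⟩, ?_⟩
        · rw [List.eq_of_mem_replicate hx]; omega
        · rw [List.eq_of_mem_replicate hx]
        · simp [List.sum_replicate]
          omega
    · ext l
      simp only [Lev, PEX, Set.mem_setOf_eq, Set.mem_empty_iff_false, iff_false, not_and]
      rintro ⟨⟨-, hpos⟩, hlen, hbd⟩ hs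
      apply h
      have : l = List.replicate a 1 := List.eq_replicate_iff.mpr ⟨hlen, fun b hb => by
        have := hpos b hb; have := hbd b hb; omega⟩
      subst this
      rw [← hs]
      simp [List.sum_replicate]
  split_ifs with h <;> rw [this] <;> simp [h, Set.ncard_singleton]

lemma SEx_rec (a i : ℕ) : SEx (a + 1) (i + 1) = SEx (a + 1) i + X ^ (i + 1) * SEx a (i + 1) := by
  have hshift : gser List.sum {l ∈ PEX (a + 1) (i + 1) | (i + 1) ∈ l}
      = X ^ (i + 1) * gser List.sum (PEX a (i + 1)) := by
    apply gser_shift (τ := List.sum) (V := PEX a (i + 1)) (i + 1) (fun l => (i + 1) :: l)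
    · rintro l ⟨⟨hs, hpos⟩, hlen, hbd⟩
      refine ⟨⟨⟨List.pairwise_cons.mpr ⟨fun b hb => hbd b hb, hs⟩, ?_⟩, by simp [hlen], ?_⟩, by simp⟩
      · intro x hx
        rcases List.mem_cons.mp hx with h | h
        · omega
        · exact hpos x h
      · intro x hx
        rcases List.mem_cons.mp hx with h | h
        · omega
        · exact hbd x h
    · intro l₁ _ l₂ _ h
      simpa using h
    · rintro x ⟨⟨⟨hs, hpos⟩, hlen, hbd⟩, hmem⟩
      have hne : x ≠ [] := List.ne_nil_of_mem hmem
      obtain ⟨hd, tl, rfl⟩ := List.exists_cons_of_ne_nil hne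
      have hcons := List.pairwise_cons.mp hs
      have hhd : hd = i + 1 := by
        rcases List.mem_cons.mp hmem with h | h
        · omega
        · have h1 := hcons.1 _ h
          have h2 := hbd hd (by simp)
          omega
      subst hhd
      refine ⟨tl, ⟨⟨hcons.2, fun y hy => hpos y (by simp [hy])⟩, by simpa using hlen,
        fun y hy => hbd y (by simp [hy])⟩, rfl⟩
    · intro l _
      simp
      omega
  have hun : gser List.sum (PEX (a + 1) (i + 1)) =
      gser List.sum (PEX (a + 1) i) + gser List.sum {l ∈ PEX (a + 1) (i + 1) | (i + 1) ∈ l} := by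
    apply gser_union
    · ext l
      simp only [PEX, Set.mem_setOf_eq, Set.mem_union]
      constructor
      · rintro ⟨hp, hlen, hbd⟩
        by_cases hmem : (i + 1) ∈ l
        · exact Or.inr ⟨⟨hp, hlen, hbd⟩, hmem⟩
        · refine Or.inl ⟨hp, hlen, fun x hx => ?_⟩
          have := hbd x hx
          have : x ≠ i + 1 := fun hh => hmem (hh ▸ hx)
          omega
      · rintro (⟨hp, hlen, hbd⟩ | ⟨⟨hp, hlen, hbd⟩, -⟩)
        · exact ⟨hp, hlen, fun x hx => le_trans (hbd x hx) (by omega)⟩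
        · exact ⟨hp, hlen, hbd⟩
    · refine Set.disjoint_left.mpr ?_
      rintro l ⟨-, -, hbd⟩ ⟨-, hmem⟩
      have := hbd _ hmem
      omega
    · exact finLev_PEX _ _
    · exact (finLev_PEX (a + 1) (i + 1)).subset (fun l hl => hl.1)
  show gser List.sum (PEX (a + 1) (i + 1)) = gser List.sum (PEX (a + 1) i) +
    X ^ (i + 1) * gser List.sum (PEX a (i + 1))
  conv_lhs => rw [hun, hshift]

lemma MEx : ∀ a i : ℕ, qPoch a * qPoch i * SEx a (i + 1) = X ^ a * qPoch (a + i) := by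
  intro a
  induction a with
  | zero =>
      intro i
      rw [SEx_zero]
      simp [qPoch]
  | succ b iha =>
      intro i
      induction i with
      | zero =>
          rw [SEx_one_col]
          simp [qPoch]
          ring
      | succ j ihj =>
          have h0 := SEx_rec b (j + 1)
          have h1 := ihj
          have h2 := iha (j + 1)
          have hq := qPoch_succ j
          have hb := qPoch_succ b
          have ht := qPoch_succ (b + j + 1)
          rw [show b + 1 + j = b + j + 1 by omega] at h1
          rw [show b + (j + 1) = b + j + 1 by omega] at h2
          rw [show b + 1 + (j + 1) = b + j + 1 + 1 by omega]
          linear_combination (qPoch (b + 1) * qPoch (j + 1)) * h0 + (1 - X ^ (j + 1)) * h1 +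
            X ^ (j + 2) * (1 - X ^ (b + 1)) * h2 + (qPoch (b + 1) * SEx (b + 1) (j + 1)) * hq +
            (X ^ (j + 2) * qPoch (j + 1) * SEx b (j + 2)) * hb - X ^ (b + 1) * ht

end Series


section Strat

def sig3 : List ℕ × List ℕ × List ℕ → ℕ := fun t => t.1.sum + t.2.1.sum + t.2.2.sum
def A3 (r : ℕ) : Set (List ℕ × List ℕ × List ℕ) := {t | Type3b r t.1 t.2.1 t.2.2}
def c3 : List ℕ × List ℕ × List ℕ → ℕ × ℕ := fun t => (Kpart t.1, Ikpart t.2.1 (Kpart t.1))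

lemma cseries_eq (r : ℕ) : cseries (Type3b r) = gser sig3 (A3 r) := rfl

lemma finLev_A3 (r : ℕ) : FinLev sig3 (A3 r) := by
  intro n
  apply Set.Finite.subset ((finite_ptn_sum_le n).prod
    ((finite_ptn_sum_le n).prod (finite_ptn_sum_le n)))
  rintro ⟨b, rd, g⟩ ⟨ht, hs⟩
  obtain ⟨hb, hrd, hg, -⟩ := ht
  have hs' : b.sum + rd.sum + g.sum = n := hs
  exact ⟨⟨hb, by show b.sum ≤ n; omega⟩, ⟨hrd, by show rd.sum ≤ n; omega⟩, hg,
    by show g.sum ≤ n; omega⟩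

lemma stratum_eq (r k i : ℕ) (hk : 1 ≤ k) (hi : 1 ≤ i) (hri : r ≤ k + i) :
    gser sig3 (A3 r ∩ {x | c3 x = (k, i)}) =
      X ^ (k + i) * (SGge k * (SGge i * SEx (k - 1) i)) := by
  rw [SGge, SGge, SEx, gser_mul (finLev_PGE i) (finLev_PEX (k-1) i),
    gser_mul (finLev_PGE k) (FinLev.prod (finLev_PGE i) (finLev_PEX (k-1) i))]
  apply gser_shift (k + i) (fun y : List ℕ × List ℕ × List ℕ =>
    (y.1 ++ [k], y.2.1 ++ i :: y.2.2, ([] : List ℕ)))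
  · rintro ⟨b₀, δ, γ⟩ ⟨⟨⟨hbs, hbp⟩, hbge⟩, ⟨⟨hds, hdp⟩, hdge⟩, ⟨⟨hgs, hgp⟩, hglen, hgbd⟩⟩
    dsimp only at hbs hbp hbge hds hdp hdge hgs hgp hglen hgbd
    have hrdlen : (δ ++ i :: γ).length = δ.length + γ.length + 1 := by
      simp
      omega
    have hKp : Kpart (b₀ ++ [k]) = k := Kpart_concat b₀ k
    have hIk : Ikpart (δ ++ i :: γ) k = i := by
      have hgl : γ.length + 1 = k := by omega
      rw [← hgl]
      exact Ikpart_concat δ γ i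
    have hsort2 : (δ ++ i :: γ).Pairwise (· ≥ ·) := by
      refine List.pairwise_append.mpr ⟨hds, List.pairwise_cons.mpr ⟨fun b hb => hgbd b hb, hgs⟩, ?_⟩
      intro x hx y hy
      have hxi := hdge x hx
      rcases List.mem_cons.mp hy with h | h
      · omega
      · have := hgbd y h; omega
    constructor
    · show Type3b r (b₀ ++ [k]) (δ ++ i :: γ) []
      refine ⟨⟨?_, ?_⟩, ⟨hsort2, ?_⟩, ⟨List.Pairwise.nil, by simp⟩, by simp, by simp, rfl, ?_, ?_⟩
      · refine List.pairwise_append.mpr ⟨hbs, List.pairwise_singleton _ _, ?_⟩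
        intro x hx y hy
        rw [List.mem_singleton] at hy
        subst hy
        exact hbge x hx
      · intro x hx
        rcases List.mem_append.mp hx with h | h
        · exact hbp x h
        · rw [List.mem_singleton] at h; omega
      · intro x hx
        rcases List.mem_append.mp hx with h | h
        · exact hdp x h
        · rcases List.mem_cons.mp h with h' | h'
          · omega
          · exact hgp x h'
      · rw [hKp, hrdlen]; omega
      · rw [hKp, hIk]; exact hri
    · show c3 (b₀ ++ [k], δ ++ i :: γ, []) = (k, i)
      show (Kpart (b₀ ++ [k]), Ikpart (δ ++ i :: γ) (Kpart (b₀ ++ [k]))) = (k, i)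
      rw [hKp, hIk]
  · rintro ⟨b₀, δ, γ⟩ ⟨-, ⟨-, -, hglen, -⟩⟩ ⟨b₀', δ', γ'⟩ ⟨-, ⟨-, -, hglen', -⟩⟩ heq
    dsimp only at hglen hglen'
    simp only [Prod.mk.injEq] at heq
    obtain ⟨h1, h2, -⟩ := heq
    have hb : b₀ = b₀' := by simpa using h1
    have hlen : δ.length = δ'.length := by
      have := congrArg List.length h2
      simp at this
      omega
    obtain ⟨hδ, hcons⟩ := List.append_inj h2 hlen
    simp only [List.cons.injEq] at hcons
    simp [hb, hδ, hcons.2]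
  · rintro ⟨b, rd, g⟩ ⟨hA, hc⟩
    obtain ⟨⟨hbs, hbp⟩, ⟨hrs, hrp⟩, -, hbne, hrne, hgnil, hkl, -⟩ := hA
    dsimp only at hbs hbp hrs hrp hbne hrne hgnil hkl
    have hc' : Kpart b = k ∧ Ikpart rd (Kpart b) = i := by
      have : c3 (b, rd, g) = (k, i) := hc
      simpa [c3, Prod.ext_iff] using this
    have hKb : Kpart b = k := hc'.1
    have hlast : b.getLast hbne = k := by rw [← Kpart_eq_getLast hbne, hKb]
    have hkl' : k ≤ rd.length := by rw [← hKb]; exact hkl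
    have hm : rd.length - k < rd.length := by
      have : rd.length ≠ 0 := fun hh => hrne (List.length_eq_zero_iff.mp hh)
      omega
    set m := rd.length - k with hm_def
    have hiv : rd[m] = i := by
      have := hc'.2
      rw [hKb] at this
      rw [← this, Ikpart, List.getD_eq_getElem _ _ hm]
    have hidrop : i ∈ rd.drop m := by
      rw [← List.getElem_cons_drop hm, hiv]
      exact List.mem_cons_self
    have hcross : ∀ x ∈ rd.take m, ∀ y ∈ rd.drop m, x ≥ y := by
      have hrs2 := hrs
      rw [← List.take_append_drop m rd] at hrs2
      exact (List.pairwise_append.mp hrs2).2.2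
    have hds : (rd.drop m).Pairwise (· ≥ ·) := hrs.sublist (List.drop_sublist m rd)
    have hds2 : (rd[m] :: rd.drop (m+1)).Pairwise (· ≥ ·) := by
      rw [List.getElem_cons_drop hm]; exact hds
    refine ⟨(b.dropLast, rd.take m, rd.drop (m+1)), ⟨?_, ?_, ?_⟩, ?_⟩
    · refine ⟨⟨hbs.sublist (List.dropLast_sublist b), ?_⟩, ?_⟩
      · exact fun y hy => hbp y ((List.dropLast_sublist b).subset hy)
      · intro y hy
        have hyb : y ∈ b := (List.dropLast_sublist b).subset hy
        have := sorted_last_le hbs hbne y hyb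
        omega
    · refine ⟨⟨hrs.sublist (List.take_sublist m rd), ?_⟩, ?_⟩
      · exact fun y hy => hrp y ((List.take_sublist m rd).subset hy)
      · intro y hy
        have := hcross y hy i hidrop
        omega
    · refine ⟨⟨hrs.sublist (List.drop_sublist (m+1) rd), ?_⟩, ?_, ?_⟩
      · exact fun y hy => hrp y ((List.drop_sublist (m+1) rd).subset hy)
      · rw [List.length_drop]; omega
      · intro y hy
        have := (List.pairwise_cons.mp hds2).1 y hy
        rw [hiv] at this
        omega
    · have h1 : b.dropLast ++ [k] = b := by
        rw [← hlast]
        exact List.dropLast_append_getLast hbne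
      have h2 : rd.take m ++ i :: rd.drop (m+1) = rd := by
        rw [← hiv, List.getElem_cons_drop hm, List.take_append_drop]
      show (_, _, _) = (b, rd, g)
      rw [h1, h2, ← hgnil]
  · rintro ⟨b₀, δ, γ⟩ -
    show (b₀ ++ [k]).sum + (δ ++ i :: γ).sum + List.sum [] = _ + (k + i)
    simp
    ring

lemma coeff_cseries (r n : ℕ) :
    (coeff n) (cseries (Type3b r)) =
      ∑ p ∈ (Icc 1 n ×ˢ Icc 1 n).filter (fun p : ℕ × ℕ => r ≤ p.1 + p.2),
        (coeff n) (X ^ (p.1 + p.2) * (SGge p.1 * (SGge p.2 * SEx (p.1 - 1) p.2))) := by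
  rw [cseries_eq, coeff_gser_strat (finLev_A3 r) c3
    ((Icc 1 n ×ˢ Icc 1 n).filter (fun p : ℕ × ℕ => r ≤ p.1 + p.2)) ?_]
  · apply Finset.sum_congr rfl
    rintro ⟨k, i⟩ hp
    rw [Finset.mem_filter, Finset.mem_product, Finset.mem_Icc, Finset.mem_Icc] at hp
    rw [stratum_eq r k i (by omega) (by omega) hp.2]
  · rintro ⟨b, rd, g⟩ ⟨hA, hs⟩
    obtain ⟨⟨hbs, hbp⟩, ⟨hrs, hrp⟩, -, hbne, hrne, hgnil, hkl, hri⟩ := hA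
    have hs' : b.sum + rd.sum + g.sum = n := hs
    have hKmem : Kpart b ∈ b := by
      rw [Kpart_eq_getLast hbne]; exact List.getLast_mem hbne
    have hK1 : 1 ≤ Kpart b := hbp _ hKmem
    have hKn : Kpart b ≤ n := by
      have := List.single_le_sum (fun x _ => Nat.zero_le x) _ hKmem
      omega
    have hm : rd.length - Kpart b < rd.length := by
      have : rd.length ≠ 0 := fun hh => hrne (List.length_eq_zero_iff.mp hh)
      omega
    have hImem : Ikpart rd (Kpart b) ∈ rd := by
      rw [Ikpart, List.getD_eq_getElem _ _ hm]
      exact List.getElem_mem _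
    have hI1 : 1 ≤ Ikpart rd (Kpart b) := hrp _ hImem
    have hIn : Ikpart rd (Kpart b) ≤ n := by
      have := List.single_le_sum (fun x _ => Nat.zero_le x) _ hImem
      omega
    rw [Finset.mem_filter, Finset.mem_product, Finset.mem_Icc, Finset.mem_Icc]
    exact ⟨⟨⟨hK1, hKn⟩, hI1, hIn⟩, hri⟩

end Strat

section Endgame

lemma qPoch_one : qPoch 1 = 1 - X := by
  rw [qPoch, Finset.prod_range_one, pow_one]

lemma unit1X : ((1 : PowerSeries ℚ) - X)⁻¹ * (1 - X) = 1 := by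
  apply PowerSeries.inv_mul_cancel
  rw [map_sub, map_one, constantCoeff_X, sub_zero]
  norm_num

lemma inv_shift {s b : PowerSeries ℚ} (h : (1 - X) * s = b) :
    s = ((1 : PowerSeries ℚ) - X)⁻¹ * b := by
  have h2 := congrArg (fun z => ((1 : PowerSeries ℚ) - X)⁻¹ * z) h
  have h2 : ((1 : PowerSeries ℚ) - X)⁻¹ * ((1 - X) * s) = ((1 : PowerSeries ℚ) - X)⁻¹ * b := h2
  rw [← mul_assoc, unit1X, one_mul] at h2
  exact h2

lemma Hq_const : constantCoeff Hq = 1 := by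
  rw [← coeff_zero_eq_constantCoeff, ← SGge_one, coeff_SGge_zero]

lemma HqInv : Hq⁻¹ * Hq = 1 := by
  apply PowerSeries.inv_mul_cancel
  rw [Hq_const]
  norm_num

lemma lowmul {f g : PowerSeries ℚ} {n : ℕ} (h : ∀ m, m ≤ n → (coeff m) g = 0) :
    (coeff n) (f * g) = 0 := by
  rw [coeff_mul]
  apply Finset.sum_eq_zero
  rintro ⟨u, v⟩ huv
  rw [Finset.HasAntidiagonal.mem_antidiagonal] at huv
  rw [h v (by omega), mul_zero]

lemma coeff_X_pow_mul_zero {g : PowerSeries ℚ} {n e : ℕ} (h : n < e) :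
    (coeff n) (X ^ e * g) = 0 := by
  rw [coeff_mul]
  apply Finset.sum_eq_zero
  rintro ⟨u, v⟩ huv
  rw [Finset.HasAntidiagonal.mem_antidiagonal] at huv
  rw [coeff_X_pow, if_neg (by omega), zero_mul]

lemma geom (m : ℕ) : ((1 : PowerSeries ℚ) - X) * ∑ k ∈ Icc 1 m, (X : PowerSeries ℚ) ^ k
    = X - X ^ (m + 1) := by
  induction m with
  | zero => simp
  | succ j ih =>
      rw [Finset.sum_Icc_succ_top (by omega)]
      rw [mul_add]
      rw [ih]
      ring

lemma geoT (s : ℕ) : ((1 : PowerSeries ℚ) - X) *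
    ∑ k ∈ Icc 1 (s + 1), (X : PowerSeries ℚ) ^ (s + 2 + k - 1) * qPoch s
    = X ^ (s + 2) * qPoch (s + 1) := by
  have hfac : ∑ k ∈ Icc 1 (s + 1), (X : PowerSeries ℚ) ^ (s + 2 + k - 1) * qPoch s
      = X ^ (s + 1) * qPoch s * ∑ k ∈ Icc 1 (s + 1), (X : PowerSeries ℚ) ^ k := by
    rw [Finset.mul_sum]
    apply Finset.sum_congr rfl
    intro k _
    rw [show s + 2 + k - 1 = (s + 1) + k by omega, pow_add]
    ring
  rw [hfac]
  linear_combination (X ^ (s + 1) * qPoch s) * geom (s + 1) - X ^ (s + 2) * qPoch_succ s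

lemma teleQ : ∀ b a : ℕ, 1 ≤ a → a ≤ b + 1 →
    ∑ t ∈ Icc a b, (X : PowerSeries ℚ) ^ t * qPoch (t - 1) = qPoch (a - 1) - qPoch b := by
  intro b
  induction b with
  | zero =>
      intro a ha hab
      have : a = 1 := by omega
      subst this
      simp
  | succ j ih =>
      intro a ha hab
      rcases Nat.lt_or_ge a (j + 2) with h | h
      · have haj : a ≤ j + 1 := by omega
        rw [Finset.sum_Icc_succ_top haj, ih a ha haj]
        have hq := qPoch_succ j
        rw [show j + 1 - 1 = j by omega]
        linear_combination hq
      · have : a = j + 2 := by omega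
        subst this
        rw [show Icc (j + 2) (j + 1) = ∅ by
          apply Finset.Icc_eq_empty
          omega]
        simp [show j + 2 - 1 = j + 1 by omega]

lemma hterm (k i : ℕ) (hk : 1 ≤ k) (hi : 1 ≤ i) :
    X ^ (k + i) * (SGge k * (SGge i * SEx (k - 1) i)) =
      Hq ^ 2 * (X ^ (k + i + k - 1) * qPoch (k + i - 2)) := by
  obtain ⟨a, rfl⟩ : ∃ a, k = a + 1 := ⟨k - 1, by omega⟩
  obtain ⟨c, rfl⟩ : ∃ c, i = c + 1 := ⟨i - 1, by omega⟩
  rw [show a + 1 - 1 = a by omega, show a + 1 + (c + 1) + (a + 1) - 1 = a + c + 2 + a by omega,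
    show a + 1 + (c + 1) - 2 = a + c by omega, ← SGge_closed a, ← SGge_closed c,
    show a + 1 + (c + 1) = a + c + 2 by omega]
  have hm := MEx a c
  linear_combination (Hq ^ 2 * X ^ (a + c + 2)) * hm

theorem S3b_eq' (r : ℕ) (hr : 2 ≤ r) :
    cseries (Type3b r) = Hq ^ 2 * qPoch (r - 1) * (qPoch 1)⁻¹ - Hq * (qPoch 1)⁻¹ := by
  apply PowerSeries.ext
  intro n
  have hmemD : ∀ p : ℕ × ℕ,
      p ∈ (Icc 1 n ×ˢ Icc 1 n).filter (fun p : ℕ × ℕ => r ≤ p.1 + p.2) ↔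
        ((1 ≤ p.1 ∧ p.1 ≤ n) ∧ (1 ≤ p.2 ∧ p.2 ≤ n)) ∧ r ≤ p.1 + p.2 := by
    intro p
    rw [Finset.mem_filter, Finset.mem_product, Finset.mem_Icc, Finset.mem_Icc]
  have e1 := coeff_cseries r n
  have e2 : ∑ p ∈ (Icc 1 n ×ˢ Icc 1 n).filter (fun p : ℕ × ℕ => r ≤ p.1 + p.2),
        (coeff n) (X ^ (p.1 + p.2) * (SGge p.1 * (SGge p.2 * SEx (p.1 - 1) p.2)))
      = ∑ p ∈ (Icc 1 n ×ˢ Icc 1 n).filter (fun p : ℕ × ℕ => r ≤ p.1 + p.2),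
        (coeff n) (Hq ^ 2 * (X ^ (p.1 + p.2 + p.1 - 1) * qPoch (p.1 + p.2 - 2))) := by
    apply Finset.sum_congr rfl
    intro p hp
    rw [hmemD] at hp
    rw [hterm p.1 p.2 (by omega) (by omega)]
  have e3 : ∑ p ∈ (Icc 1 n ×ˢ Icc 1 n).filter (fun p : ℕ × ℕ => r ≤ p.1 + p.2),
        (coeff n) (Hq ^ 2 * (X ^ (p.1 + p.2 + p.1 - 1) * qPoch (p.1 + p.2 - 2)))
      = ∑ p ∈ ((Icc 1 n ×ˢ Icc 1 n).filter (fun p : ℕ × ℕ => r ≤ p.1 + p.2)).filter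
          (fun p : ℕ × ℕ => p.1 + p.2 ≤ n),
        (coeff n) (Hq ^ 2 * (X ^ (p.1 + p.2 + p.1 - 1) * qPoch (p.1 + p.2 - 2))) := by
    symm
    apply Finset.sum_subset (Finset.filter_subset _ _)
    intro p hp hnp
    rw [Finset.mem_filter] at hnp
    rw [hmemD] at hp
    have hn : ¬ (p.1 + p.2 ≤ n) := fun hh => hnp ⟨by rw [hmemD]; exact hp, hh⟩
    have hre : Hq ^ 2 * (X ^ (p.1 + p.2 + p.1 - 1) * qPoch (p.1 + p.2 - 2)) =
        X ^ (p.1 + p.2 + p.1 - 1) * (Hq ^ 2 * qPoch (p.1 + p.2 - 2)) := by ring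
    rw [hre, coeff_X_pow_mul_zero (by omega)]
  have e4 : ∑ p ∈ ((Icc 1 n ×ˢ Icc 1 n).filter (fun p : ℕ × ℕ => r ≤ p.1 + p.2)).filter
          (fun p : ℕ × ℕ => p.1 + p.2 ≤ n),
        (coeff n) (Hq ^ 2 * (X ^ (p.1 + p.2 + p.1 - 1) * qPoch (p.1 + p.2 - 2)))
      = ∑ q ∈ (Icc r n ×ˢ Icc 1 n).filter (fun q : ℕ × ℕ => q.2 < q.1),
        (coeff n) (Hq ^ 2 * (X ^ (q.1 + q.2 - 1) * qPoch (q.1 - 2))) := by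
    apply Finset.sum_nbij' (i := fun p : ℕ × ℕ => (p.1 + p.2, p.1))
      (j := fun q : ℕ × ℕ => (q.2, q.1 - q.2))
    · rintro ⟨k, i⟩ hp
      simp only [Finset.mem_filter, hmemD] at hp
      simp only [Finset.mem_filter, Finset.mem_product, Finset.mem_Icc]
      omega
    · rintro ⟨t, k⟩ hq
      simp only [Finset.mem_filter, Finset.mem_product, Finset.mem_Icc] at hq
      simp only [Finset.mem_filter, hmemD]
      omega
    · rintro ⟨k, i⟩ hp
      simp only [Finset.mem_filter, hmemD] at hp
      simp only [Prod.mk.injEq]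
      refine ⟨?_, ?_⟩ <;> first | trivial | omega
    · rintro ⟨t, k⟩ hq
      simp only [Finset.mem_filter, Finset.mem_product, Finset.mem_Icc] at hq
      simp only [Prod.mk.injEq]
      refine ⟨?_, ?_⟩ <;> first | trivial | omega
    · rintro ⟨k, i⟩ hp
      rfl
  have e5 : ∑ q ∈ (Icc r n ×ˢ Icc 1 n).filter (fun q : ℕ × ℕ => q.2 < q.1),
        (coeff n) (Hq ^ 2 * (X ^ (q.1 + q.2 - 1) * qPoch (q.1 - 2)))
      = ∑ t ∈ Icc r n, ∑ k ∈ Icc 1 n,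
          if k < t then (coeff n) (Hq ^ 2 * (X ^ (t + k - 1) * qPoch (t - 2))) else 0 := by
    rw [Finset.sum_filter, Finset.sum_product]
  have hinner : ∀ t ∈ Icc r n,
      (∑ k ∈ Icc 1 n, if k < t then
          (coeff n) (Hq ^ 2 * (X ^ (t + k - 1) * qPoch (t - 2))) else 0)
        = (coeff n) ((Hq ^ 2 * ((1 : PowerSeries ℚ) - X)⁻¹) * (X ^ t * qPoch (t - 1))) := by
    intro t ht
    rw [Finset.mem_Icc] at ht
    rw [← Finset.sum_filter]
    rw [show (Icc 1 n).filter (fun k => k < t) = Icc 1 (t - 1) by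
      ext k
      simp only [Finset.mem_filter, Finset.mem_Icc]
      omega]
    obtain ⟨s, rfl⟩ : ∃ s, t = s + 2 := ⟨t - 2, by omega⟩
    rw [show s + 2 - 1 = s + 1 by omega, show s + 2 - 2 = s by omega]
    have hsum : ∑ k ∈ Icc 1 (s + 1), (X : PowerSeries ℚ) ^ (s + 2 + k - 1) * qPoch s
        = ((1 : PowerSeries ℚ) - X)⁻¹ * (X ^ (s + 2) * qPoch (s + 1)) := inv_shift (geoT s)
    calc ∑ k ∈ Icc 1 (s + 1), (coeff n)
          (Hq ^ 2 * ((X : PowerSeries ℚ) ^ (s + 2 + k - 1) * qPoch s))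
        = (coeff n) (Hq ^ 2 *
            ∑ k ∈ Icc 1 (s + 1), (X : PowerSeries ℚ) ^ (s + 2 + k - 1) * qPoch s) := by
          rw [Finset.mul_sum, map_sum]
      _ = _ := by
          rw [hsum, ← mul_assoc]
  have e6 : ∑ t ∈ Icc r n, ∑ k ∈ Icc 1 n,
        (if k < t then (coeff n) (Hq ^ 2 * (X ^ (t + k - 1) * qPoch (t - 2))) else 0)
      = (coeff n) ((Hq ^ 2 * ((1 : PowerSeries ℚ) - X)⁻¹) *
          ∑ t ∈ Icc r n, X ^ t * qPoch (t - 1)) := by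
    rw [Finset.sum_congr rfl hinner, Finset.mul_sum, map_sum]
  have hzero2 : (coeff n) ((Hq * ((1 : PowerSeries ℚ) - X)⁻¹) * (SGge (n + 1) - 1)) = 0 := by
    apply lowmul
    intro m hm
    rw [map_sub, coeff_one]
    rcases Nat.eq_zero_or_pos m with h | h
    · subst h
      rw [coeff_SGge_zero]
      norm_num
    · rw [coeff_SGge_low _ _ (by omega) (by omega), if_neg (by omega)]
      norm_num
  have hRHS : Hq ^ 2 * qPoch (r - 1) * (qPoch 1)⁻¹ - Hq * (qPoch 1)⁻¹ =
      (Hq ^ 2 * ((1 : PowerSeries ℚ) - X)⁻¹) * (qPoch (r - 1) - qPoch n) +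
        (Hq * ((1 : PowerSeries ℚ) - X)⁻¹) * (SGge (n + 1) - 1) := by
    rw [qPoch_one]
    have hS := SGge_closed n
    linear_combination (Hq * ((1 : PowerSeries ℚ) - X)⁻¹) * hS
  have efin : (coeff n) ((Hq ^ 2 * ((1 : PowerSeries ℚ) - X)⁻¹) *
        ∑ t ∈ Icc r n, X ^ t * qPoch (t - 1))
      = (coeff n) ((Hq ^ 2 * ((1 : PowerSeries ℚ) - X)⁻¹) * (qPoch (r - 1) - qPoch n)) := by
    rcases le_or_gt r (n + 1) with h | h
    · rw [teleQ n r (by omega) h]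
    · rw [show Icc r n = ∅ from Finset.Icc_eq_empty (by omega)]
      have htel := teleQ (r - 1) (n + 1) (by omega) (by omega)
      rw [show n + 1 - 1 = n by omega] at htel
      have hdiff : qPoch (r - 1) - qPoch n =
          - ∑ t ∈ Icc (n + 1) (r - 1), (X : PowerSeries ℚ) ^ t * qPoch (t - 1) := by
        rw [htel]; ring
      rw [hdiff, Finset.sum_empty, mul_zero, map_zero, mul_neg, map_neg, Finset.mul_sum, map_sum]
      have hz : ∀ t ∈ Icc (n + 1) (r - 1),
          (coeff n) (Hq ^ 2 * ((1 : PowerSeries ℚ) - X)⁻¹ *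
            ((X : PowerSeries ℚ) ^ t * qPoch (t - 1))) = 0 := by
        intro t ht
        rw [Finset.mem_Icc] at ht
        have hre : Hq ^ 2 * ((1 : PowerSeries ℚ) - X)⁻¹ * ((X : PowerSeries ℚ) ^ t * qPoch (t - 1)) =
            X ^ t * (Hq ^ 2 * ((1 : PowerSeries ℚ) - X)⁻¹ * qPoch (t - 1)) := by ring
        rw [hre, coeff_X_pow_mul_zero (by omega)]
      rw [Finset.sum_congr rfl hz, Finset.sum_const_zero, neg_zero]
  rw [e1, e2, e3, e4, e5, e6, efin, hRHS, map_add, hzero2, add_zero]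

end Endgame

/-- `S_{3,b} = H² (q)_{r−1}/(q)_1 − H/(q)_1`. -/
theorem S3b_eq (r : ℕ) (hr : 2 ≤ r) :
    cseries (Type3b r) = Hq ^ 2 * qPoch (r - 1) * (qPoch 1)⁻¹ - Hq * (qPoch 1)⁻¹ := by
  exact S3b_eq' r hr
end

section
/- For integers r ≥ 2, ℓ ≥ 0 and n ≥ 0: G_{r,ℓ}(n) = Σ_{m=0}^{ℓ+r−1} b_{r,r}(m,n) − Σ_{i=1}^{r−1} b_{r,i}(ℓ+i, n). -/
open PowerSeries Finset

/-- Gordon's difference condition: `λ_j − λ_{j+r−1} ≥ 2` whenever both parts exist. -/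
def GordonCond (r : ℕ) (l : List ℕ) : Prop :=
  ∀ j : ℕ, j + (r - 1) < l.length → l.getD (j + (r - 1)) 0 + 2 ≤ l.getD j 0

/-- membership in `B_{r,i}`: Gordon's difference condition and at most `i−1` parts equal to 1. -/
def MemB (r i : ℕ) (l : List ℕ) : Prop := IsPtn l ∧ GordonCond r l ∧ l.count 1 ≤ i - 1

/-- `b_{r,i}(m,n)`: the number of partitions in `B_{r,i}(n)` with exactly `m` parts. -/
noncomputable def bcount (r i m n : ℕ) : ℕ :=
  Set.ncard {l : List ℕ | IsPtn l ∧ l.sum = n ∧ GordonCond r l ∧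
    l.count 1 ≤ i - 1 ∧ l.length = m}

/-- `G_{r,ℓ}(n)`: the number of partitions in `B_{r,r}(n)` with at most `ℓ` parts
different from 1. -/
noncomputable def Gcount (r ℓ n : ℕ) : ℕ :=
  Set.ncard {l : List ℕ | MemB r r l ∧ l.sum = n ∧ l.length - l.count 1 ≤ ℓ}

lemma finite_ptn (n : ℕ) : {l : List ℕ | IsPtn l ∧ l.sum = n}.Finite := by
  classical
  have hsub : {l : List ℕ | IsPtn l ∧ l.sum = n} ⊆
      Set.range (fun p : n.Partition => Multiset.sort p.parts (· ≥ ·)) := by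
    rintro l ⟨⟨hs, hp⟩, hsum⟩
    refine ⟨⟨(l : Multiset ℕ), fun hi => hp _ hi, by simpa using hsum⟩, ?_⟩
    refine List.Perm.eq_of_pairwise' (Multiset.pairwise_sort _ _) hs ?_
    exact Multiset.coe_eq_coe.mp (Multiset.sort_eq _ _)
  exact (Set.finite_range _).subset hsub

/-- `G_{r,ℓ}(n) = Σ_{m=0}^{ℓ+r−1} b_{r,r}(m,n) − Σ_{i=1}^{r−1} b_{r,i}(ℓ+i, n)`. -/
theorem Gcount_eq (r ℓ n : ℕ) (hr : 2 ≤ r) :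
    (Gcount r ℓ n : ℤ) = (∑ m ∈ Finset.range (ℓ + r), (bcount r r m n : ℤ))
      - ∑ i ∈ Finset.Icc 1 (r - 1), (bcount r i (ℓ + i) n : ℤ) := by
  classical
  set FP := (finite_ptn n).toFinset with hFPdef
  have hmemFP : ∀ l, l ∈ FP ↔ IsPtn l ∧ l.sum = n := by
    intro l; simp [hFPdef, Set.Finite.mem_toFinset]
  -- helper: ncard of such sets as filter cards
  have hcard : ∀ (q : List ℕ → Prop) (_ : DecidablePred q),
      {l : List ℕ | IsPtn l ∧ l.sum = n ∧ q l}.ncard = (FP.filter q).card := by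
    intro q _
    rw [← Set.ncard_coe_finset]
    congr 1
    ext l
    simp only [Finset.coe_filter, Set.mem_setOf_eq, hmemFP]
    tauto
  have hb : ∀ i m, bcount r i m n = (FP.filter (fun l : List ℕ =>
      GordonCond r l ∧ l.count 1 ≤ i - 1 ∧ l.length = m)).card := by
    intro i m
    rw [bcount]; exact hcard _ _
  have hg : Gcount r ℓ n = (FP.filter (fun l : List ℕ =>
      GordonCond r l ∧ l.count 1 ≤ r - 1 ∧ l.length - l.count 1 ≤ ℓ)).card := by
    rw [Gcount, show {l : List ℕ | MemB r r l ∧ l.sum = n ∧ l.length - l.count 1 ≤ ℓ}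
        = {l : List ℕ | IsPtn l ∧ l.sum = n ∧ (GordonCond r l ∧ l.count 1 ≤ r - 1 ∧
          l.length - l.count 1 ≤ ℓ)} from by
      ext l; simp only [Set.mem_setOf_eq, MemB]; tauto]
    exact hcard _ _
  -- the big filtered set
  set S := FP.filter (fun l : List ℕ =>
    GordonCond r l ∧ l.count 1 ≤ r - 1 ∧ l.length < ℓ + r) with hSdef
  -- RHS sum equals card S
  have hBsum : ∑ m ∈ Finset.range (ℓ + r), bcount r r m n = S.card := by
    have hd : ∀ x ∈ Finset.range (ℓ + r), ∀ y ∈ Finset.range (ℓ + r), x ≠ y →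
        Disjoint (FP.filter (fun l : List ℕ =>
          GordonCond r l ∧ l.count 1 ≤ r - 1 ∧ l.length = x))
        (FP.filter (fun l : List ℕ =>
          GordonCond r l ∧ l.count 1 ≤ r - 1 ∧ l.length = y)) := by
      intro x _ y _ hxy
      rw [Finset.disjoint_left]
      rintro l hl hl'
      simp only [Finset.mem_filter] at hl hl'
      exact hxy (hl.2.2.2 ▸ hl'.2.2.2)
    calc ∑ m ∈ Finset.range (ℓ + r), bcount r r m n
        = ∑ m ∈ Finset.range (ℓ + r), (FP.filter (fun l : List ℕ =>
            GordonCond r l ∧ l.count 1 ≤ r - 1 ∧ l.length = m)).card :=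
          Finset.sum_congr rfl fun m _ => hb r m
      _ = ((Finset.range (ℓ + r)).biUnion (fun m => FP.filter (fun l : List ℕ =>
            GordonCond r l ∧ l.count 1 ≤ r - 1 ∧ l.length = m))).card :=
          (Finset.card_biUnion hd).symm
      _ = S.card := by
          congr 1
          ext l
          simp only [Finset.mem_biUnion, Finset.mem_filter, Finset.mem_range, hSdef]
          constructor
          · rintro ⟨m, hm, hF, hG, hc, hlm⟩
            exact ⟨hF, hG, hc, hlm ▸ hm⟩
          · rintro ⟨hF, hG, hc, hlen⟩
            exact ⟨l.length, hlen, hF, hG, hc, rfl⟩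
  -- split S
  have hsplit : (S.filter (fun l : List ℕ => l.length - l.count 1 ≤ ℓ)).card
      + (S.filter (fun l : List ℕ => ¬ (l.length - l.count 1 ≤ ℓ))).card = S.card :=
    Finset.card_filter_add_card_filter_not _
  -- first piece is Gcount
  have hA : S.filter (fun l : List ℕ => l.length - l.count 1 ≤ ℓ)
      = FP.filter (fun l : List ℕ =>
        GordonCond r l ∧ l.count 1 ≤ r - 1 ∧ l.length - l.count 1 ≤ ℓ) := by
    rw [hSdef, Finset.filter_filter]
    apply Finset.filter_congr
    intro l _
    have hcl : l.count 1 ≤ l.length := List.count_le_length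
    constructor
    · rintro ⟨⟨hG, hc, _⟩, h⟩; exact ⟨hG, hc, h⟩
    · rintro ⟨hG, hc, h⟩; exact ⟨⟨hG, hc, by omega⟩, h⟩
  -- second piece is the biUnion of the C_i
  have hCsum : ∑ i ∈ Finset.Icc 1 (r - 1), bcount r i (ℓ + i) n
      = (S.filter (fun l : List ℕ => ¬ (l.length - l.count 1 ≤ ℓ))).card := by
    have hd : ∀ x ∈ Finset.Icc 1 (r - 1), ∀ y ∈ Finset.Icc 1 (r - 1), x ≠ y →
        Disjoint (FP.filter (fun l : List ℕ =>
          GordonCond r l ∧ l.count 1 ≤ x - 1 ∧ l.length = ℓ + x))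
        (FP.filter (fun l : List ℕ =>
          GordonCond r l ∧ l.count 1 ≤ y - 1 ∧ l.length = ℓ + y)) := by
      intro x _ y _ hxy
      rw [Finset.disjoint_left]
      rintro l hl hl'
      simp only [Finset.mem_filter] at hl hl'
      have := hl.2.2.2
      have := hl'.2.2.2
      omega
    calc ∑ i ∈ Finset.Icc 1 (r - 1), bcount r i (ℓ + i) n
        = ∑ i ∈ Finset.Icc 1 (r - 1), (FP.filter (fun l : List ℕ =>
            GordonCond r l ∧ l.count 1 ≤ i - 1 ∧ l.length = ℓ + i)).card :=
          Finset.sum_congr rfl fun i _ => hb i (ℓ + i)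
      _ = ((Finset.Icc 1 (r - 1)).biUnion (fun i => FP.filter (fun l : List ℕ =>
            GordonCond r l ∧ l.count 1 ≤ i - 1 ∧ l.length = ℓ + i))).card :=
          (Finset.card_biUnion hd).symm
      _ = (S.filter (fun l : List ℕ => ¬ (l.length - l.count 1 ≤ ℓ))).card := by
          congr 1
          ext l
          have hcl : l.count 1 ≤ l.length := List.count_le_length
          simp only [Finset.mem_biUnion, Finset.mem_filter, Finset.mem_Icc, hSdef,
            Finset.filter_filter]
          constructor
          · rintro ⟨i, ⟨hi1, hi2⟩, hF, hG, hc, hlen⟩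
            exact ⟨hF, ⟨hG, by omega, by omega⟩, by omega⟩
          · rintro ⟨hF, ⟨hG, hc, hlen⟩, hnot⟩
            exact ⟨l.length - ℓ, ⟨by omega, by omega⟩, hF, hG, by omega, by omega⟩
  -- put everything together over ℤ
  have key : Gcount r ℓ n + ∑ i ∈ Finset.Icc 1 (r - 1), bcount r i (ℓ + i) n
      = ∑ m ∈ Finset.range (ℓ + r), bcount r r m n := by
    rw [hg, hBsum, hCsum, ← hA, hsplit]
  have h1 : (∑ m ∈ Finset.range (ℓ + r), (bcount r r m n : ℤ))
      = ((∑ m ∈ Finset.range (ℓ + r), bcount r r m n : ℕ) : ℤ) := by push_cast; rfl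
  have h2 : (∑ i ∈ Finset.Icc 1 (r - 1), (bcount r i (ℓ + i) n : ℤ))
      = ((∑ i ∈ Finset.Icc 1 (r - 1), bcount r i (ℓ + i) n : ℕ) : ℤ) := by push_cast; rfl
  rw [h1, h2]
  omega
end

section
/- For every integer r ≥ 2, the identity S_{4,b} + S_{3,b} = (H²/(q)_1) · Σ_{ℓ≥0} q^{r+ℓ} (q)_{r+ℓ−1} G_{r,ℓ} holds in the ring of formal power series (the sum being well defined since the ℓ-th term is divisible by q^{r+ℓ}). -/
open PowerSeries Finset

/-- the sum `Σ_{k ≥ 0} f k` of a family of formal power series in which the `k`-th term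
has order at least `k` (so that the sum is well defined coefficientwise). -/
noncomputable def seriesSum (f : ℕ → PowerSeries ℚ) : PowerSeries ℚ :=
  PowerSeries.mk fun n => ∑ k ∈ Finset.range (n + 1), PowerSeries.coeff n (f k)

/-- type 4.b: all three colors non-empty, `λ_g ∈ B_{r,r}`, `ℓ_r ≥ k`, `k + i_k ≥ r` and
`ℓ_g − #{1_g} < k + i_k − r + 1`. -/
def Type4b (r : ℕ) (b rd g : List ℕ) : Prop :=
  IsPtn b ∧ IsPtn rd ∧ IsPtn g ∧ b ≠ [] ∧ rd ≠ [] ∧ g ≠ [] ∧ MemB r r g ∧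
    Kpart b ≤ rd.length ∧ r ≤ Kpart b + Ikpart rd (Kpart b) ∧
    g.length - g.count 1 < Kpart b + Ikpart rd (Kpart b) - r + 1

namespace AGAux

/-- generic counting series: number of elements of `A` of size `n`. -/
noncomputable def cser {α : Type} (sz : α → ℕ) (A : Set α) : PowerSeries ℚ :=
  PowerSeries.mk fun n => ({x ∈ A | sz x = n}.ncard : ℚ)

lemma ncard_prod {α β : Type*} (S : Set α) (T : Set β) :
    (S ×ˢ T).ncard = S.ncard * T.ncard := by
  rw [← Nat.card_coe_set_eq, ← Nat.card_coe_set_eq, ← Nat.card_coe_set_eq,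
    ← Nat.card_prod]
  exact Nat.card_congr (Equiv.Set.prod S T)

lemma ncard_biUnion {ι α : Type*} (F : Finset ι) (f : ι → Set α)
    (hfin : ∀ i ∈ F, (f i).Finite)
    (hdisj : ∀ i ∈ F, ∀ j ∈ F, i ≠ j → Disjoint (f i) (f j)) :
    (⋃ i ∈ F, f i).ncard = ∑ i ∈ F, (f i).ncard := by
  classical
  induction F using Finset.induction_on with
  | empty => simp
  | @insert a F ha ih =>
    rw [Finset.set_biUnion_insert, Finset.sum_insert ha]
    have hdisj2 : Disjoint (f a) (⋃ i ∈ F, f i) := by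
      refine Set.disjoint_right.2 fun x hx hxa => ?_
      simp only [Set.mem_iUnion] at hx
      obtain ⟨i, hi, hxi⟩ := hx
      exact Set.disjoint_left.1
        (hdisj a (Finset.mem_insert_self a F) i (Finset.mem_insert_of_mem hi)
          (fun h => ha (h ▸ hi))) hxa hxi
    rw [Set.ncard_union_eq hdisj2 (hfin a (Finset.mem_insert_self a F))
      (Set.Finite.biUnion F.finite_toSet fun i hi =>
        hfin i (Finset.mem_insert_of_mem hi)),
      ih (fun i hi => hfin i (Finset.mem_insert_of_mem hi))
        (fun i hi j hj hij => hdisj i (Finset.mem_insert_of_mem hi) j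
          (Finset.mem_insert_of_mem hj) hij)]

lemma slice_prod_eq {α β : Type} (sa : α → ℕ) (sb : β → ℕ) (A : Set α) (B : Set β) (n : ℕ) :
    {p ∈ A ×ˢ B | sa p.1 + sb p.2 = n} =
      ⋃ ij ∈ Finset.HasAntidiagonal.antidiagonal n,
        ({x ∈ A | sa x = ij.1} ×ˢ {y ∈ B | sb y = ij.2} : Set (α × β)) := by
  ext p
  simp only [Set.mem_setOf_eq, Set.mem_iUnion, Set.mem_prod, Finset.HasAntidiagonal.mem_antidiagonal]
  constructor
  · rintro ⟨⟨h1, h2⟩, h3⟩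
    exact ⟨(sa p.1, sb p.2), h3, ⟨h1, rfl⟩, ⟨h2, rfl⟩⟩
  · rintro ⟨ij, hij, ⟨h1, e1⟩, ⟨h2, e2⟩⟩
    exact ⟨⟨h1, h2⟩, by rw [e1, e2]; exact hij⟩

lemma slice_prod_finite {α β : Type} (sa : α → ℕ) (sb : β → ℕ) (A : Set α) (B : Set β)
    (hA : ∀ n, {x ∈ A | sa x = n}.Finite) (hB : ∀ n, {y ∈ B | sb y = n}.Finite) (n : ℕ) :
    {p ∈ A ×ˢ B | sa p.1 + sb p.2 = n}.Finite := by
  rw [slice_prod_eq]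
  exact Set.Finite.biUnion (Finset.HasAntidiagonal.antidiagonal n).finite_toSet
    fun ij _ => (hA ij.1).prod (hB ij.2)

/-- convolution: product of counting series counts pairs. -/
lemma conv {α β : Type} (sa : α → ℕ) (sb : β → ℕ) (A : Set α) (B : Set β)
    (hA : ∀ n, {x ∈ A | sa x = n}.Finite) (hB : ∀ n, {y ∈ B | sb y = n}.Finite) :
    cser sa A * cser sb B = cser (fun p => sa p.1 + sb p.2) (A ×ˢ B) := by
  ext n
  rw [coeff_mul]
  simp only [cser, coeff_mk]
  rw [slice_prod_eq, ncard_biUnion _ _ (fun ij _ => (hA ij.1).prod (hB ij.2))]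
  · push_cast
    refine Finset.sum_congr rfl fun ij _ => ?_
    rw [ncard_prod]
    push_cast
    ring
  · rintro ij hij kl hkl hne
    refine Set.disjoint_left.2 fun p hp hp' => hne ?_
    obtain ⟨⟨-, e1⟩, -, e2⟩ := hp
    obtain ⟨⟨-, e3⟩, -, e4⟩ := hp'
    exact Prod.ext (e1 ▸ e3) (e2 ▸ e4)

/-- multiplying a `seriesSum` termwise, provided the `k`-th term has order at least `k`. -/
lemma mul_seriesSum (A : PowerSeries ℚ) (f : ℕ → PowerSeries ℚ)
    (hf : ∀ k m, m < k → PowerSeries.coeff m (f k) = 0) :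
    A * seriesSum f = seriesSum fun k => A * f k := by
  ext n
  calc PowerSeries.coeff n (A * seriesSum f)
      = ∑ p ∈ Finset.HasAntidiagonal.antidiagonal n, PowerSeries.coeff p.1 A *
          ∑ k ∈ Finset.range (n + 1), PowerSeries.coeff p.2 (f k) := by
        rw [coeff_mul]
        refine Finset.sum_congr rfl fun p hp => ?_
        have hp2 : p.2 ≤ n := by
          have := Finset.HasAntidiagonal.mem_antidiagonal.1 hp; omega
        rw [seriesSum, coeff_mk]
        congr 1
        refine Finset.sum_subset (Finset.range_subset_range.2 (by omega)) fun k _ hk => ?_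
        exact hf k p.2 (by simpa using hk)
    _ = ∑ k ∈ Finset.range (n + 1), ∑ p ∈ Finset.HasAntidiagonal.antidiagonal n,
          PowerSeries.coeff p.1 A * PowerSeries.coeff p.2 (f k) := by
        simp_rw [Finset.mul_sum]; exact Finset.sum_comm
    _ = PowerSeries.coeff n (seriesSum fun k => A * f k) := by
        rw [seriesSum, coeff_mk]
        exact Finset.sum_congr rfl fun k _ => (coeff_mul n A (f k)).symm


lemma finite_ptn (n : ℕ) : {l : List ℕ | IsPtn l ∧ l.sum = n}.Finite := by
  rw [← Set.finite_coe_iff]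
  have hinj : Function.Injective
      (fun l : {l : List ℕ // l ∈ {l : List ℕ | IsPtn l ∧ l.sum = n}} =>
        (⟨(↑l.1 : Multiset ℕ), fun {i} hi => l.2.1.2 i hi, by simpa using l.2.2⟩ :
          Nat.Partition n)) := by
    rintro ⟨l1, h1⟩ ⟨l2, h2⟩ h
    simp only [Nat.Partition.mk.injEq, Multiset.coe_eq_coe] at h
    exact Subtype.ext (List.Perm.eq_of_pairwise' h1.1.1 h2.1.1 h)
  exact Finite.of_injective _ hinj

lemma finite_sub {P : List ℕ → Prop} (hP : ∀ l, P l → IsPtn l) (n : ℕ) :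
    {l : List ℕ | P l ∧ l.sum = n}.Finite :=
  (finite_ptn n).subset (by rintro l ⟨h1, h2⟩; exact ⟨hP l h1, h2⟩)

/-! ### list helpers -/

lemma isPtn_nil : IsPtn ([] : List ℕ) := ⟨List.Pairwise.nil, by simp⟩

lemma sorted_rel {l : List ℕ} (h : l.Pairwise (· ≥ ·)) {i j : ℕ}
    (hj : j < l.length) (hij : i ≤ j) : l[j]'hj ≤ l[i]'(lt_of_le_of_lt hij hj) := by
  rcases eq_or_lt_of_le hij with rfl | hlt
  · exact le_refl _
  · exact List.pairwise_iff_getElem.1 h i j _ _ hlt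

lemma kpart_mem {l : List ℕ} (hl : l ≠ []) : Kpart l ∈ l := by
  have hlen : 0 < l.length := List.length_pos_iff.2 hl
  rw [Kpart, List.getD_eq_getElem _ _ (by omega)]
  exact List.getElem_mem _

lemma kpart_le {l : List ℕ} (h : IsPtn l) {x : ℕ} (hx : x ∈ l) : Kpart l ≤ x := by
  obtain ⟨i, hi, rfl⟩ := List.mem_iff_getElem.1 hx
  rw [Kpart, List.getD_eq_getElem _ _ (by omega)]
  exact sorted_rel h.1 (by omega) (by omega)

lemma kpart_pos {l : List ℕ} (h : IsPtn l) (hl : l ≠ []) : 0 < Kpart l :=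
  h.2 _ (kpart_mem hl)

lemma ikpart_mem {l : List ℕ} {k : ℕ} (hk : 1 ≤ k) (hkl : k ≤ l.length) :
    Ikpart l k ∈ l := by
  rw [Ikpart, List.getD_eq_getElem _ _ (by omega)]
  exact List.getElem_mem _

lemma ikpart_pos {l : List ℕ} {k : ℕ} (h : IsPtn l) (hk : 1 ≤ k) (hkl : k ≤ l.length) :
    0 < Ikpart l k := h.2 _ (ikpart_mem hk hkl)

lemma le_sum_mem {l : List ℕ} {x : ℕ} (hx : x ∈ l) : x ≤ l.sum :=
  List.le_sum_of_mem hx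

lemma length_le_sum {l : List ℕ} (h : ∀ x ∈ l, 0 < x) : l.length ≤ l.sum := by
  induction l with
  | nil => simp
  | cons a t ih =>
    have h1 : 0 < a := h a (List.mem_cons_self)
    have h2 := ih fun x hx => h x (List.mem_cons_of_mem a hx)
    simp only [List.length_cons, List.sum_cons]
    omega

lemma sum_map_pred {l : List ℕ} (h : ∀ x ∈ l, 0 < x) :
    (l.map (· - 1)).sum + l.length = l.sum := by
  induction l with
  | nil => simp
  | cons a t ih =>
    have h1 : 0 < a := h a (List.mem_cons_self)
    have h2 := ih fun x hx => h x (List.mem_cons_of_mem a hx)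
    simp only [List.map_cons, List.sum_cons, List.length_cons]
    omega

lemma takeWhile_append_replicate (p : ℕ → Bool) (A : List ℕ) (k b : ℕ)
    (hA : ∀ x ∈ A, p x = true) (hb : p b = false) :
    (A ++ List.replicate k b).takeWhile p = A := by
  induction A with
  | nil =>
    cases k with
    | zero => simp
    | succ k => simp [List.replicate_succ, List.takeWhile_cons, hb]
  | cons a t ih =>
    rw [List.cons_append, List.takeWhile_cons_of_pos (hA a (List.mem_cons_self)),
      ih fun x hx => hA x (List.mem_cons_of_mem a hx)]

/-! ### more counting series helpers -/

lemma cser_shift {α β : Type} (sa : α → ℕ) (sb : β → ℕ) (S : Set α) (T : Set β) (t : ℕ)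
    (f : α → β) (hinj : Set.InjOn f S)
    (himg : ∀ n : ℕ, f '' {x ∈ S | sa x = n} = {y ∈ T | sb y = n + t})
    (hT : ∀ y ∈ T, t ≤ sb y) :
    cser sb T = X ^ t * cser sa S := by
  ext n
  rw [cser, cser, coeff_mk, PowerSeries.coeff_X_pow_mul']
  split_ifs with h
  · rw [coeff_mk]
    norm_cast
    have h2 : n - t + t = n := by omega
    conv_lhs => rw [← h2]
    rw [← himg (n - t), Set.ncard_image_of_injOn (hinj.mono (Set.sep_subset _ _))]
  · have hempty : {y ∈ T | sb y = n} = ∅ := by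
      ext y
      simp only [Set.mem_setOf_eq, Set.mem_empty_iff_false, iff_false, not_and]
      intro hy hsy
      have := hT y hy
      omega
    rw [hempty]
    simp

lemma cser_union {α : Type} (sz : α → ℕ) (S T : Set α) (hd : Disjoint S T)
    (hfS : ∀ n, {x ∈ S | sz x = n}.Finite) (hfT : ∀ n, {x ∈ T | sz x = n}.Finite) :
    cser sz (S ∪ T) = cser sz S + cser sz T := by
  ext n
  rw [map_add]
  simp only [cser, coeff_mk]
  have hset : {x ∈ S ∪ T | sz x = n} = {x ∈ S | sz x = n} ∪ {x ∈ T | sz x = n} := by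
    ext x
    simp only [Set.mem_setOf_eq, Set.mem_union]
    tauto
  rw [hset, Set.ncard_union_eq (hd.mono (Set.sep_subset _ _) (Set.sep_subset _ _))
    (hfS n) (hfT n)]
  push_cast
  ring

lemma cser_biUnion {ι α : Type} (sz : α → ℕ) (F : Finset ι) (f : ι → Set α)
    (hfin : ∀ i ∈ F, ∀ n, {x ∈ f i | sz x = n}.Finite)
    (hdisj : ∀ i ∈ F, ∀ j ∈ F, i ≠ j → Disjoint (f i) (f j)) :
    cser sz (⋃ i ∈ F, f i) = ∑ i ∈ F, cser sz (f i) := by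
  ext n
  rw [map_sum]
  simp only [cser, coeff_mk]
  have hset : {x ∈ ⋃ i ∈ F, f i | sz x = n} = ⋃ i ∈ F, {x ∈ f i | sz x = n} := by
    ext x
    simp only [Set.mem_setOf_eq, Set.mem_iUnion]
    tauto
  rw [hset, ncard_biUnion F _ (fun i hi => hfin i hi n)
    (fun i hi j hj hij => (hdisj i hi j hj hij).mono (Set.sep_subset _ _) (Set.sep_subset _ _))]
  push_cast
  rfl

lemma cser_nil {S : Set (List ℕ)} (hS : S = {[]}) : cser List.sum S = 1 := by
  subst hS
  ext n
  rw [cser, coeff_mk, PowerSeries.coeff_one]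
  by_cases hn : n = 0
  · subst hn
    have : {x ∈ ({[]} : Set (List ℕ)) | x.sum = 0} = {[]} := by
      ext x
      simp only [Set.mem_setOf_eq, Set.mem_singleton_iff]
      constructor
      · exact fun h => h.1
      · rintro rfl; simp
    rw [this, Set.ncard_singleton]
    simp
  · have : {x ∈ ({[]} : Set (List ℕ)) | x.sum = n} = ∅ := by
      ext x
      simp only [Set.mem_setOf_eq, Set.mem_singleton_iff, Set.mem_empty_iff_false, iff_false,
        not_and]
      rintro rfl
      simpa using fun h => hn h.symm
    rw [this]
    simp [hn]

/-! ### the sets of partitions used in the proof -/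

/-- partitions with all parts at least `a`. -/
def PtnGe (a : ℕ) : Set (List ℕ) := {l | IsPtn l ∧ ∀ x ∈ l, a ≤ x}

/-- partitions with at most `m` parts, all at most `c`. -/
def BoxSet (m c : ℕ) : Set (List ℕ) := {l | IsPtn l ∧ l.length ≤ m ∧ ∀ x ∈ l, x ≤ c}

/-- partitions with exactly `m` parts, all at most `c`. -/
def RowsSet (m c : ℕ) : Set (List ℕ) := {l | IsPtn l ∧ l.length = m ∧ ∀ x ∈ l, x ≤ c}

/-- nonempty partitions with smallest part `a`. -/
def MinSet (a : ℕ) : Set (List ℕ) := {l | IsPtn l ∧ l ≠ [] ∧ Kpart l = a}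

/-- partitions with at least `a` parts whose `a`-th smallest part is `c`. -/
def RSet (a c : ℕ) : Set (List ℕ) := {l | IsPtn l ∧ a ≤ l.length ∧ Ikpart l a = c}

noncomputable def Emk (a : ℕ) : PowerSeries ℚ := cser List.sum (PtnGe a)

noncomputable def Dmk (m c : ℕ) : PowerSeries ℚ := cser List.sum (BoxSet m c)

lemma finite_ptnGe (a n : ℕ) : {l ∈ PtnGe a | l.sum = n}.Finite :=
  finite_sub (fun l hl => hl.1) n

lemma finite_minSet (a n : ℕ) : {l ∈ MinSet a | l.sum = n}.Finite :=
  finite_sub (fun l hl => hl.1) n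

lemma finite_boxSet (m c n : ℕ) : {l ∈ BoxSet m c | l.sum = n}.Finite :=
  finite_sub (fun l hl => hl.1) n

lemma finite_rowsSet (m c n : ℕ) : {l ∈ RowsSet m c | l.sum = n}.Finite :=
  finite_sub (fun l hl => hl.1) n

lemma finite_rSet (a c n : ℕ) : {l ∈ RSet a c | l.sum = n}.Finite :=
  finite_sub (fun l hl => hl.1) n

/-! ### the `E` series -/

lemma minSet_cser (a : ℕ) (ha : 1 ≤ a) :
    cser List.sum (MinSet a) = X ^ a * Emk a := by
  refine cser_shift _ _ (PtnGe a) _ a (fun l => l ++ [a])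
    ((List.append_left_injective [a]).injOn) (fun n => ?_) (fun y hy => ?_)
  · ext y
    simp only [Set.mem_image, Set.mem_setOf_eq]
    constructor
    · rintro ⟨l, ⟨⟨⟨hs, hp⟩, hge⟩, hsum⟩, rfl⟩
      refine ⟨⟨⟨?_, ?_⟩, by simp, ?_⟩, by simp [hsum]⟩
      · refine List.pairwise_append.2 ⟨hs, List.pairwise_singleton _ _, ?_⟩
        intro x hx b hb
        rw [List.mem_singleton] at hb
        subst hb
        exact hge x hx
      · intro x hx
        rcases List.mem_append.1 hx with h | h
        · exact hp x h
        · rw [List.mem_singleton] at h; omega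
      · rw [Kpart]
        have hlen : (l ++ [a]).length = l.length + 1 := by simp
        rw [hlen, Nat.add_sub_cancel, List.getD_eq_getElem _ _ (by simp)]
        exact List.getElem_concat_length rfl _
    · rintro ⟨⟨hPtn, hne, hK⟩, hsum⟩
      have hlen : 0 < y.length := List.length_pos_iff.2 hne
      have hKg : Kpart y = y.getLast hne := by
        rw [Kpart, List.getD_eq_getElem _ _ (by omega), List.getLast_eq_getElem]
      have hy' : y.dropLast ++ [a] = y := by
        conv_rhs => rw [← List.dropLast_append_getLast hne]
        rw [← hKg, hK]
      have hsub : y.dropLast.Sublist y := List.dropLast_sublist y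
      have hsum' : y.dropLast.sum + a = y.sum := by
        conv_rhs => rw [← hy']
        simp
      refine ⟨y.dropLast, ⟨⟨⟨hPtn.1.sublist hsub, fun x hx => hPtn.2 x (hsub.subset hx)⟩,
        fun x hx => ?_⟩, by omega⟩, hy'⟩
      rw [← hK]
      exact kpart_le hPtn (hsub.subset hx)
  · rcases hy with ⟨hPtn, hne, hK⟩
    rw [← hK]
    exact le_sum_mem (kpart_mem hne)

lemma ptnGe_split (a : ℕ) (ha : 1 ≤ a) : PtnGe a = PtnGe (a + 1) ∪ MinSet a := by
  ext l
  simp only [PtnGe, MinSet, Set.mem_setOf_eq, Set.mem_union]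
  constructor
  · rintro ⟨hPtn, hge⟩
    rcases eq_or_ne l [] with rfl | hne
    · exact Or.inl ⟨hPtn, by simp⟩
    · have h1 : a ≤ Kpart l := hge _ (kpart_mem hne)
      rcases eq_or_lt_of_le h1 with heq | hlt
      · exact Or.inr ⟨hPtn, hne, heq.symm⟩
      · exact Or.inl ⟨hPtn, fun x hx => le_trans hlt (kpart_le hPtn hx)⟩
  · rintro (⟨hPtn, hge⟩ | ⟨hPtn, hne, hK⟩)
    · exact ⟨hPtn, fun x hx => le_trans (by omega) (hge x hx)⟩
    · exact ⟨hPtn, fun x hx => hK ▸ kpart_le hPtn hx⟩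

lemma ptnGe_disj (a : ℕ) : Disjoint (PtnGe (a + 1)) (MinSet a) := by
  rw [Set.disjoint_left]
  rintro l ⟨hPtn, hge⟩ ⟨hPtn', hne, hK⟩
  have := hge _ (kpart_mem hne)
  omega

lemma emk_succ (a : ℕ) (ha : 1 ≤ a) : Emk (a + 1) = (1 - X ^ a) * Emk a := by
  have key : cser List.sum (PtnGe a)
      = cser List.sum (PtnGe (a + 1)) + X ^ a * cser List.sum (PtnGe a) := by
    conv_lhs => rw [ptnGe_split a ha]
    rw [cser_union _ _ _ (ptnGe_disj a) (finite_ptnGe _) (finite_minSet _), minSet_cser a ha, Emk]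
  show cser List.sum (PtnGe (a + 1)) = (1 - X ^ a) * cser List.sum (PtnGe a)
  linear_combination -key

lemma qPoch_succ (n : ℕ) : qPoch (n + 1) = qPoch n * (1 - X ^ (n + 1)) :=
  Finset.prod_range_succ _ _

lemma emk_one : Emk 1 = Hq := by
  rw [Emk, Hq, cser]
  have hset : ∀ n : ℕ, {l ∈ PtnGe 1 | l.sum = n} = {l : List ℕ | IsPtn l ∧ l.sum = n} := by
    intro n
    ext l
    simp only [PtnGe, Set.mem_setOf_eq]
    exact ⟨fun h => ⟨h.1.1, h.2⟩, fun h => ⟨⟨h.1, fun x hx => h.1.2 x hx⟩, h.2⟩⟩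
  simp only [hset]

lemma emk_eq (a : ℕ) : Emk (a + 1) = qPoch a * Hq := by
  induction a with
  | zero => rw [emk_one]; simp [qPoch]
  | succ a ih =>
    rw [emk_succ (a + 1) (by omega), ih, qPoch_succ]
    ring

/-! ### the box series and the Gaussian identity -/

lemma qPoch_zero : qPoch 0 = 1 := Finset.prod_range_zero _

/-- partitions with at most `m+1` parts, all at most `c+1`, containing a part `c+1`. -/
def TopSet (m c : ℕ) : Set (List ℕ) :=
  {l | IsPtn l ∧ l.length ≤ m + 1 ∧ (∀ x ∈ l, x ≤ c + 1) ∧ c + 1 ∈ l}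

lemma finite_topSet (m c n : ℕ) : {l ∈ TopSet m c | l.sum = n}.Finite :=
  finite_sub (fun l hl => hl.1) n

lemma boxSet_zero_left (c : ℕ) : BoxSet 0 c = {[]} := by
  ext l
  simp only [BoxSet, Set.mem_setOf_eq, Set.mem_singleton_iff]
  constructor
  · rintro ⟨-, hlen, -⟩
    exact List.length_eq_zero_iff.1 (by omega)
  · rintro rfl
    exact ⟨isPtn_nil, by simp, by simp⟩

lemma boxSet_zero_right (m : ℕ) : BoxSet m 0 = {[]} := by
  ext l
  simp only [BoxSet, Set.mem_setOf_eq, Set.mem_singleton_iff]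
  constructor
  · rintro ⟨⟨-, hpos⟩, -, hle⟩
    rcases l with - | ⟨a, t⟩
    · rfl
    · have h1 := hpos a (List.mem_cons_self)
      have h2 := hle a (List.mem_cons_self)
      omega
  · rintro rfl
    exact ⟨isPtn_nil, by simp, by simp⟩

lemma dmk_zero_left (c : ℕ) : Dmk 0 c = 1 := cser_nil (boxSet_zero_left c)

lemma dmk_zero_right (m : ℕ) : Dmk m 0 = 1 := cser_nil (boxSet_zero_right m)

lemma boxSet_split (m c : ℕ) : BoxSet (m + 1) (c + 1) = BoxSet (m + 1) c ∪ TopSet m c := by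
  ext l
  simp only [BoxSet, TopSet, Set.mem_setOf_eq, Set.mem_union]
  constructor
  · rintro ⟨hPtn, hlen, hle⟩
    by_cases hc : c + 1 ∈ l
    · exact Or.inr ⟨hPtn, hlen, hle, hc⟩
    · refine Or.inl ⟨hPtn, hlen, fun x hx => ?_⟩
      have := hle x hx
      rcases Nat.lt_or_ge x (c + 1) with h | h
      · omega
      · exact absurd (by omega : x = c + 1) (fun he => hc (he ▸ hx))
  · rintro (⟨hPtn, hlen, hle⟩ | ⟨hPtn, hlen, hle, -⟩)
    · exact ⟨hPtn, hlen, fun x hx => by have := hle x hx; omega⟩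
    · exact ⟨hPtn, hlen, hle⟩

lemma boxSet_disj (m c : ℕ) : Disjoint (BoxSet (m + 1) c) (TopSet m c) := by
  rw [Set.disjoint_left]
  rintro l ⟨-, -, hle⟩ ⟨-, -, -, hmem⟩
  have := hle _ hmem
  omega

lemma topSet_cser (m c : ℕ) :
    cser List.sum (TopSet m c) = X ^ (c + 1) * Dmk m (c + 1) := by
  refine cser_shift _ _ (BoxSet m (c + 1)) _ (c + 1) (fun l => (c + 1) :: l)
    (List.cons_injective.injOn) (fun n => ?_) (fun y hy => le_sum_mem hy.2.2.2)
  ext y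
  simp only [Set.mem_image, Set.mem_setOf_eq, BoxSet, TopSet]
  constructor
  · rintro ⟨l, ⟨⟨⟨hs, hp⟩, hlen, hle⟩, hsum⟩, rfl⟩
    refine ⟨⟨⟨List.pairwise_cons.2 ⟨fun b hb => hle b hb, hs⟩, ?_⟩, by simp; omega, ?_,
      List.mem_cons_self⟩, by simp [hsum]; omega⟩
    · intro x hx
      rcases List.mem_cons.1 hx with rfl | h
      · omega
      · exact hp x h
    · intro x hx
      rcases List.mem_cons.1 hx with rfl | h
      · omega
      · exact hle x h
  · rintro ⟨⟨hPtn, hlen, hle, hmem⟩, hsum⟩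
    have hne : y ≠ [] := List.ne_nil_of_mem hmem
    have hhead : y.head hne = c + 1 := by
      obtain ⟨i, hi, hyi⟩ := List.mem_iff_getElem.1 hmem
      have h0 : y.head hne = y[0]'(List.length_pos_iff.2 hne) := List.head_eq_getElem hne
      refine le_antisymm (hle _ (List.head_mem hne)) ?_
      rw [h0, ← hyi]
      exact sorted_rel hPtn.1 hi (by omega)
    have hy : y = (c + 1) :: y.tail := by
      conv_lhs => rw [← List.cons_head_tail hne]
      rw [hhead]
    have htail : y.tail.Sublist y := List.tail_sublist y
    refine ⟨y.tail, ⟨⟨⟨hPtn.1.sublist htail, fun x hx => hPtn.2 x (htail.subset hx)⟩, ?_,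
      fun x hx => hle x (htail.subset hx)⟩, ?_⟩, hy.symm⟩
    · rw [List.length_tail]
      omega
    · have := congrArg List.sum hy
      rw [List.sum_cons] at this
      omega

lemma dmk_rec (m c : ℕ) :
    Dmk (m + 1) (c + 1) = Dmk (m + 1) c + X ^ (c + 1) * Dmk m (c + 1) := by
  rw [Dmk, boxSet_split, cser_union _ _ _ (boxSet_disj m c) (finite_boxSet _ _) (finite_topSet _ _),
    topSet_cser]
  rfl

lemma gauss : ∀ m c : ℕ, qPoch m * qPoch c * Dmk m c = qPoch (m + c) := by
  intro m
  induction m with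
  | zero =>
    intro c
    rw [dmk_zero_left, qPoch_zero]
    simp
  | succ m ihm =>
    intro c
    induction c with
    | zero =>
      rw [dmk_zero_right, qPoch_zero]
      simp
    | succ c ihc =>
      calc qPoch (m + 1) * qPoch (c + 1) * Dmk (m + 1) (c + 1)
          = qPoch (m + 1) * qPoch (c + 1) * (Dmk (m + 1) c + X ^ (c + 1) * Dmk m (c + 1)) := by
            rw [dmk_rec]
        _ = (1 - X ^ (c + 1)) * (qPoch (m + 1) * qPoch c * Dmk (m + 1) c)
            + X ^ (c + 1) * (1 - X ^ (m + 1)) * (qPoch m * qPoch (c + 1) * Dmk m (c + 1)) := by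
            rw [qPoch_succ c, qPoch_succ m]
            ring
        _ = (1 - X ^ (c + 1)) * qPoch (m + 1 + c)
            + X ^ (c + 1) * (1 - X ^ (m + 1)) * qPoch (m + (c + 1)) := by
            rw [ihc, ihm (c + 1)]
        _ = qPoch (m + 1 + (c + 1)) := by
            have h1 : m + 1 + c = m + c + 1 := by omega
            have h2 : m + (c + 1) = m + c + 1 := by omega
            have h3 : m + 1 + (c + 1) = m + c + 1 + 1 := by omega
            rw [h1, h2, h3, qPoch_succ (m + c + 1)]
            have h4 : (X : PowerSeries ℚ) ^ (m + c + 1 + 1) = X ^ (c + 1) * X ^ (m + 1) := by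
              rw [← pow_add]
              congr 1
              omega
            rw [h4]
            ring

/-! ### partitions with exactly `m` parts, parts at most `c+1` -/

lemma sum_map_succ (l : List ℕ) : (l.map (· + 1)).sum = l.sum + l.length := by
  induction l with
  | nil => simp
  | cons a t ih =>
    simp only [List.map_cons, List.sum_cons, List.length_cons, ih]
    omega

lemma rowsSet_cser (m c : ℕ) :
    cser List.sum (RowsSet m (c + 1)) = X ^ m * Dmk m c := by
  refine cser_shift _ _ (BoxSet m c) _ m
    (fun μ => μ.map (· + 1) ++ List.replicate (m - μ.length) 1) ?_ (fun n => ?_)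
    (fun y hy => by rw [← hy.2.1]; exact length_le_sum hy.1.2)
  · intro μ hμ ν hν h
    have hall : ∀ (σ : List ℕ), (∀ x ∈ σ, 0 < x) →
        ∀ x ∈ σ.map (· + 1), (fun x => decide (1 < x)) x = true := by
      intro σ hσ x hx
      obtain ⟨u, hu, rfl⟩ := List.mem_map.1 hx
      show decide (1 < u + 1) = true
      rw [decide_eq_true_eq]
      have := hσ u hu
      omega
    have e1 := takeWhile_append_replicate (fun x => decide (1 < x)) (μ.map (· + 1))
      (m - μ.length) 1 (hall μ hμ.1.2) (by simp)
    have e2 := takeWhile_append_replicate (fun x => decide (1 < x)) (ν.map (· + 1))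
      (m - ν.length) 1 (hall ν hν.1.2) (by simp)
    have := congrArg (List.takeWhile fun x => decide (1 < x)) h
    rw [e1, e2] at this
    exact List.map_injective_iff.2 (add_left_injective 1) this
  · ext y
    simp only [Set.mem_image, Set.mem_setOf_eq, BoxSet, RowsSet]
    constructor
    · rintro ⟨μ, ⟨⟨⟨hs, hp⟩, hlen, hle⟩, hsum⟩, rfl⟩
      refine ⟨⟨⟨?_, ?_⟩, by simp; omega, ?_⟩, ?_⟩
      · refine List.pairwise_append.2 ⟨hs.map _ (fun a b hab => by omega), ?_, ?_⟩
        · exact List.pairwise_replicate.2 (Or.inr (le_refl 1))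
        · intro x hx b hb
          obtain ⟨u, -, rfl⟩ := List.mem_map.1 hx
          have := List.eq_of_mem_replicate hb
          omega
      · intro x hx
        rcases List.mem_append.1 hx with h | h
        · obtain ⟨u, -, rfl⟩ := List.mem_map.1 h
          omega
        · have := List.eq_of_mem_replicate h
          omega
      · intro x hx
        rcases List.mem_append.1 hx with h | h
        · obtain ⟨u, hu, rfl⟩ := List.mem_map.1 h
          have := hle u hu
          omega
        · have := List.eq_of_mem_replicate h
          omega
      · rw [List.sum_append, sum_map_succ, List.sum_replicate, smul_eq_mul]
        omega
    · rintro ⟨⟨hPtn, hlen, hle⟩, hsum⟩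
      set p : ℕ → Bool := fun x => decide (1 < x) with hp
      set A := y.takeWhile p with hA
      set B := y.dropWhile p with hB
      have hAB : A ++ B = y := by
        rw [hA, hB]
        exact List.takeWhile_append_dropWhile
      have hAmem : ∀ x ∈ A, 1 < x := by
        intro x hx
        have := List.mem_takeWhile_imp hx
        rw [hp] at this
        simpa using this
      have hBmem : ∀ x ∈ B, x = 1 := by
        intro x hx
        have hBne : B ≠ [] := List.ne_nil_of_mem hx
        have hhead : ¬ 1 < B.head hBne := by
          have := List.head_dropWhile_not p (l := y) (by rw [← hB]; exact hBne)
          simpa [hp] using this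
        have hheadpos : 0 < B.head hBne :=
          hPtn.2 _ ((List.dropWhile_sublist p).subset (List.head_mem hBne))
        have hxpos : 0 < x := hPtn.2 _ ((List.dropWhile_sublist p).subset hx)
        have hsortB : B.Pairwise (· ≥ ·) := hPtn.1.sublist (List.dropWhile_sublist p)
        have hyB : B = B.head hBne :: B.tail := (List.cons_head_tail hBne).symm
        rcases List.mem_cons.1 (hyB ▸ hx) with h | h
        · omega
        · have := List.rel_of_pairwise_cons (hyB ▸ hsortB) h
          omega
      have hBrep : B = List.replicate B.length 1 := List.eq_replicate_length.2 hBmem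
      have hApos : ∀ x ∈ A, 0 < x := fun x hx => by have := hAmem x hx; omega
      have hsumA : (A.map (· - 1)).sum + A.length = A.sum := sum_map_pred hApos
      have hlenAB : A.length + B.length = m := by
        have h5 := congrArg List.length hAB
        rw [List.length_append, hlen] at h5
        exact h5
      have hsumAB : A.sum + B.length = n + m := by
        have := congrArg List.sum hAB
        rw [List.sum_append] at this
        have hBsum : B.sum = B.length := by
          conv_lhs => rw [hBrep]
          rw [List.sum_replicate, smul_eq_mul]
          omega
        omega
      refine ⟨A.map (· - 1), ⟨⟨⟨?_, ?_⟩, ?_, ?_⟩, ?_⟩, ?_⟩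
      · exact (hPtn.1.sublist (List.takeWhile_sublist p)).map _ (fun a b hab => by omega)
      · intro x hx
        obtain ⟨u, hu, rfl⟩ := List.mem_map.1 hx
        have := hAmem u hu
        omega
      · rw [List.length_map]
        omega
      · intro x hx
        obtain ⟨u, hu, rfl⟩ := List.mem_map.1 hx
        have h1 := hAmem u hu
        have h2 := hle u ((List.takeWhile_sublist p).subset hu)
        omega
      · omega
      · rw [List.map_map]
        have hmapid : A.map ((· + 1) ∘ (· - 1)) = A := by
          have : ∀ x ∈ A, ((· + 1) ∘ (· - 1)) x = id x := by
            intro x hx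
            have := hAmem x hx
            simp [Function.comp]
            omega
          rw [List.map_congr_left this, List.map_id]
        rw [hmapid, List.length_map]
        have hBlen : m - A.length = B.length := by omega
        rw [hBlen, ← hBrep]
        exact hAB

/-! ### the series for `RSet` -/

lemma rSet_cser (a c : ℕ) :
    cser List.sum (RSet (a + 1) (c + 1)) =
      X ^ (c + 1) * cser (fun p : List ℕ × List ℕ => p.1.sum + p.2.sum)
        (PtnGe (c + 1) ×ˢ RowsSet a (c + 1)) := by
  refine cser_shift _ _ _ _ (c + 1) (fun p => p.1 ++ (c + 1) :: p.2) ?_ (fun n => ?_)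
    (fun y hy => by rw [← hy.2.2]; exact le_sum_mem (ikpart_mem (by omega) hy.2.1))
  · rintro ⟨ρ1, σ1⟩ h1 ⟨ρ2, σ2⟩ h2 h
    simp only [Set.mem_prod] at h1 h2
    have hσ1 : σ1.length = a := h1.2.2.1
    have hσ2 : σ2.length = a := h2.2.2.1
    have hlen : ρ1.length = ρ2.length := by
      have := congrArg List.length h
      simp only [List.length_append, List.length_cons] at this
      omega
    obtain ⟨e1, e2⟩ := List.append_inj h hlen
    have e3 : σ1 = σ2 := by
      injection e2 with e2a e2b
    rw [Prod.ext_iff]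
    exact ⟨e1, e3⟩
  · ext y
    simp only [Set.mem_image, Set.mem_setOf_eq, Set.mem_prod, RSet, PtnGe, RowsSet]
    constructor
    · rintro ⟨⟨ρ, σ⟩, ⟨⟨⟨⟨hρs, hρp⟩, hρge⟩, ⟨hσs, hσp⟩, hσlen, hσle⟩, hsum⟩, rfl⟩
      dsimp only at hsum hρge hρs hρp hσs hσp hσlen hσle
      dsimp only
      have hsorted : (ρ ++ (c + 1) :: σ).Pairwise (· ≥ ·) := by
        refine List.pairwise_append.2 ⟨hρs, List.pairwise_cons.2 ⟨fun b hb => hσle b hb, hσs⟩, ?_⟩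
        intro x hx b hb
        rcases List.mem_cons.1 hb with rfl | h
        · exact hρge x hx
        · exact le_trans (hσle b h) (hρge x hx)
      have hlen : (ρ ++ (c + 1) :: σ).length = ρ.length + a + 1 := by
        simp [hσlen]
        omega
      refine ⟨⟨⟨hsorted, ?_⟩, by omega, ?_⟩, ?_⟩
      · intro x hx
        rcases List.mem_append.1 hx with h | h
        · exact hρp x h
        · rcases List.mem_cons.1 h with rfl | h
          · omega
          · exact hσp x h
      · rw [Ikpart, hlen]
        have hidx : ρ.length + a + 1 - (a + 1) = ρ.length := by omega
        rw [hidx, List.getD_eq_getElem _ _ (by rw [hlen]; omega),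
          List.getElem_append_right (le_refl ρ.length)]
        simp
      · rw [List.sum_append, List.sum_cons]
        omega
    · rintro ⟨⟨hPtn, hlen, hIk⟩, hsum⟩
      have hylen : 0 < y.length := by omega
      have htlt : y.length - (a + 1) < y.length := by omega
      have hyt : y[y.length - (a + 1)]'htlt = c + 1 := by
        rw [← hIk, Ikpart, List.getD_eq_getElem _ _ htlt]
      have hysplit : y.take (y.length - (a + 1)) ++ (c + 1) :: y.drop (y.length - (a + 1) + 1) = y := by
        conv_rhs => rw [← List.take_append_drop (y.length - (a + 1)) y]
        congr 1
        rw [← hyt]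
        exact (List.getElem_cons_drop htlt)
      refine ⟨(y.take (y.length - (a + 1)), y.drop (y.length - (a + 1) + 1)), ⟨⟨⟨⟨?_, ?_⟩, ?_⟩,
        ⟨?_, ?_⟩, ?_, ?_⟩, ?_⟩, hysplit⟩
      · exact hPtn.1.sublist (List.take_sublist _ _)
      · exact fun x hx => hPtn.2 x ((List.take_sublist _ _).subset hx)
      · intro x hx
        obtain ⟨i, hi, rfl⟩ := List.mem_iff_getElem.1 hx
        rw [List.getElem_take]
        rw [← hyt]
        have hilt : i < y.length - (a + 1) := by
          have := hi
          simp at this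
          omega
        exact sorted_rel hPtn.1 htlt (by omega)
      · exact hPtn.1.sublist (List.drop_sublist _ _)
      · exact fun x hx => hPtn.2 x ((List.drop_sublist _ _).subset hx)
      · rw [List.length_drop]
        omega
      · intro x hx
        obtain ⟨i, hi, rfl⟩ := List.mem_iff_getElem.1 hx
        rw [List.getElem_drop]
        rw [← hyt]
        exact sorted_rel hPtn.1 (by simp at hi ⊢; omega) (by omega)
      · dsimp only
        have := congrArg List.sum hysplit
        rw [List.sum_append, List.sum_cons] at this
        omega

/-! ### the pair series -/

/-- pairs `(b, rd)` of nonempty partitions with `k ≤ ℓ_r` and `k + i_k = j`. -/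
def PairSet (j : ℕ) : Set (List ℕ × List ℕ) :=
  {p | IsPtn p.1 ∧ IsPtn p.2 ∧ p.1 ≠ [] ∧ p.2 ≠ [] ∧ Kpart p.1 ≤ p.2.length ∧
    Kpart p.1 + Ikpart p.2 (Kpart p.1) = j}

lemma finite_pair_slice {P : Set (List ℕ × List ℕ)} (hP : ∀ p ∈ P, IsPtn p.1 ∧ IsPtn p.2)
    (n : ℕ) : {p ∈ P | p.1.sum + p.2.sum = n}.Finite := by
  have h := slice_prod_finite List.sum List.sum {l : List ℕ | IsPtn l} {l : List ℕ | IsPtn l}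
    (fun m => finite_sub (fun _ h => h) m) (fun m => finite_sub (fun _ h => h) m) n
  refine h.subset ?_
  rintro p ⟨hp, hs⟩
  exact ⟨⟨(hP p hp).1, (hP p hp).2⟩, hs⟩

lemma pairSet_split (j : ℕ) (hj : 2 ≤ j) :
    PairSet j = ⋃ a ∈ Finset.range (j - 1),
      ((MinSet (a + 1) ×ˢ RSet (a + 1) (j - (a + 1))) : Set (List ℕ × List ℕ)) := by
  ext p
  simp only [PairSet, Set.mem_setOf_eq, Set.mem_iUnion, Set.mem_prod, MinSet, RSet,
    Finset.mem_range]
  constructor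
  · rintro ⟨h1, h2, hne1, hne2, hkl, hsum⟩
    have hk1 : 1 ≤ Kpart p.1 := kpart_pos h1 hne1
    have hik : 1 ≤ Ikpart p.2 (Kpart p.1) := ikpart_pos h2 hk1 hkl
    refine ⟨Kpart p.1 - 1, by omega, ?_⟩
    have ha : Kpart p.1 - 1 + 1 = Kpart p.1 := by omega
    rw [ha]
    exact ⟨⟨h1, hne1, rfl⟩, h2, hkl, by omega⟩
  · rintro ⟨a, haj, ⟨h1, hne1, hK⟩, h2, hlen, hIk⟩
    have hne2 : p.2 ≠ [] := by
      intro h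
      rw [h] at hlen
      simp at hlen
    refine ⟨h1, h2, hne1, hne2, by rw [hK]; exact hlen, ?_⟩
    rw [hK, hIk]
    omega

lemma pair_term (j a : ℕ) (hj : 2 ≤ j) (ha : a < j - 1) :
    cser (fun p : List ℕ × List ℕ => p.1.sum + p.2.sum)
      (MinSet (a + 1) ×ˢ RSet (a + 1) (j - (a + 1)))
      = X ^ j * X ^ a * (Hq ^ 2 * qPoch (j - 2)) := by
  rw [← conv _ _ _ _ (fun m => finite_minSet _ m) (fun m => finite_rSet _ _ m)]
  rw [minSet_cser (a + 1) (by omega)]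
  have hc : j - (a + 1) = (j - a - 2) + 1 := by omega
  rw [hc, rSet_cser a (j - a - 2)]
  rw [← conv _ _ _ _ (fun m => finite_ptnGe _ m) (fun m => finite_rowsSet _ _ m)]
  rw [rowsSet_cser a (j - a - 2)]
  rw [show cser List.sum (PtnGe (j - a - 2 + 1)) = Emk (j - a - 2 + 1) from rfl]
  rw [emk_eq a, emk_eq (j - a - 2)]
  have hg : qPoch a * qPoch (j - a - 2) * Dmk a (j - a - 2) = qPoch (j - 2) := by
    have h := gauss a (j - a - 2)
    rw [show a + (j - a - 2) = j - 2 from by omega] at h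
    exact h
  have hx : (X : PowerSeries ℚ) ^ (a + 1) * X ^ (j - a - 2 + 1) = X ^ j := by
    rw [← pow_add, show a + 1 + (j - a - 2 + 1) = j from by omega]
  linear_combination (X ^ (a + 1) * X ^ (j - a - 2 + 1) * X ^ a * Hq ^ 2) * hg
    + (X ^ a * Hq ^ 2 * qPoch (j - 2)) * hx

lemma pairSet_cser (j : ℕ) (hj : 2 ≤ j) :
    cser (fun p : List ℕ × List ℕ => p.1.sum + p.2.sum) (PairSet j)
      = ∑ a ∈ Finset.range (j - 1), X ^ j * X ^ a * (Hq ^ 2 * qPoch (j - 2)) := by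
  rw [pairSet_split j hj, cser_biUnion _ _ _
    (fun a _ n => finite_pair_slice (fun p hp => ⟨hp.1.1, hp.2.1⟩) n)
    (fun a _ b _ hab => ?_)]
  · exact Finset.sum_congr rfl fun a ha => pair_term j a hj (Finset.mem_range.1 ha)
  · rw [Set.disjoint_left]
    rintro p ⟨⟨-, -, hKa⟩, -⟩ ⟨⟨-, -, hKb⟩, -⟩
    exact hab (by omega)

lemma pairKey (j : ℕ) (hj : 2 ≤ j) :
    cser (fun p : List ℕ × List ℕ => p.1.sum + p.2.sum) (PairSet j) * (1 - X)
      = X ^ j * Hq ^ 2 * qPoch (j - 1) := by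
  rw [pairSet_cser j hj]
  have hsum : ∑ a ∈ Finset.range (j - 1), X ^ j * X ^ a * (Hq ^ 2 * qPoch (j - 2))
      = X ^ j * (Hq ^ 2 * qPoch (j - 2)) * ∑ a ∈ Finset.range (j - 1), (X : PowerSeries ℚ) ^ a := by
    rw [Finset.mul_sum]
    exact Finset.sum_congr rfl fun a _ => by ring
  rw [hsum]
  have hgeom : (∑ a ∈ Finset.range (j - 1), (X : PowerSeries ℚ) ^ a) * (1 - X)
      = 1 - X ^ (j - 1) := by
    have h := geom_sum_mul (X : PowerSeries ℚ) (j - 1)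
    linear_combination -h
  have hq : qPoch (j - 2) * (1 - X ^ (j - 1)) = qPoch (j - 1) := by
    have h := qPoch_succ (j - 2)
    rw [show j - 2 + 1 = j - 1 by omega] at h
    exact h.symm
  linear_combination (X ^ j * Hq ^ 2 * qPoch (j - 2)) * hgeom + (X ^ j * Hq ^ 2) * hq

/-! ### assembly -/

/-- the set counted by `Gcount r ℓ`. -/
def GSet (r ℓ : ℕ) : Set (List ℕ) := {l | MemB r r l ∧ l.length - l.count 1 ≤ ℓ}

lemma gser_eq (r ℓ : ℕ) :
    (PowerSeries.mk fun n => (Gcount r ℓ n : ℚ)) = cser List.sum (GSet r ℓ) := by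
  ext n
  rw [coeff_mk, cser, coeff_mk, Gcount]
  norm_cast
  have hset : {l : List ℕ | MemB r r l ∧ l.sum = n ∧ l.length - l.count 1 ≤ ℓ}
      = {l ∈ GSet r ℓ | l.sum = n} := by
    ext l
    simp only [Set.mem_setOf_eq, GSet]
    tauto
  rw [hset]

lemma memB_nil (r : ℕ) : MemB r r [] :=
  ⟨isPtn_nil, fun _ hj => absurd hj (by simp), by simp⟩

/-- the union of types 3.b and 4.b. -/
def USet (r : ℕ) : Set (List ℕ × List ℕ × List ℕ) :=
  {t | IsPtn t.1 ∧ IsPtn t.2.1 ∧ t.1 ≠ [] ∧ t.2.1 ≠ [] ∧ MemB r r t.2.2 ∧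
    Kpart t.1 ≤ t.2.1.length ∧ r ≤ Kpart t.1 + Ikpart t.2.1 (Kpart t.1) ∧
    t.2.2.length - t.2.2.count 1 ≤ Kpart t.1 + Ikpart t.2.1 (Kpart t.1) - r}

/-- the part of `USet` with `k + i_k = r + ℓ`. -/
def USetL (r ℓ : ℕ) : Set (List ℕ × List ℕ × List ℕ) :=
  {t ∈ USet r | Kpart t.1 + Ikpart t.2.1 (Kpart t.1) = r + ℓ}

lemma finite_triple_slice (n : ℕ) :
    {t : List ℕ × List ℕ × List ℕ |
      (IsPtn t.1 ∧ IsPtn t.2.1 ∧ IsPtn t.2.2) ∧ t.1.sum + t.2.1.sum + t.2.2.sum = n}.Finite := by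
  have h2 : ∀ m : ℕ, {y ∈ ({l : List ℕ | IsPtn l} ×ˢ {l : List ℕ | IsPtn l} :
      Set (List ℕ × List ℕ)) | y.1.sum + y.2.sum = m}.Finite :=
    fun m => slice_prod_finite _ _ _ _ (fun k => finite_sub (fun _ h => h) k)
      (fun k => finite_sub (fun _ h => h) k) m
  have h3 := slice_prod_finite List.sum (fun y : List ℕ × List ℕ => y.1.sum + y.2.sum)
    {l : List ℕ | IsPtn l} ({l : List ℕ | IsPtn l} ×ˢ {l : List ℕ | IsPtn l})
    (fun k => finite_sub (fun _ h => h) k) h2 n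
  refine h3.subset ?_
  rintro t ⟨⟨h1, h2', h3'⟩, hs⟩
  exact ⟨⟨h1, h2', h3'⟩, by omega⟩

lemma step1 (r : ℕ) (hr : 2 ≤ r) :
    cseries (Type4b r) + cseries (Type3b r)
      = cser (fun t : List ℕ × List ℕ × List ℕ => t.1.sum + t.2.1.sum + t.2.2.sum) (USet r) := by
  ext n
  rw [map_add, cseries, cseries, coeff_mk, coeff_mk, cser, coeff_mk]
  beta_reduce
  have hunion : {t : List ℕ × List ℕ × List ℕ | Type4b r t.1 t.2.1 t.2.2 ∧
        t.1.sum + t.2.1.sum + t.2.2.sum = n}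
      ∪ {t : List ℕ × List ℕ × List ℕ | Type3b r t.1 t.2.1 t.2.2 ∧
        t.1.sum + t.2.1.sum + t.2.2.sum = n}
      = {t ∈ USet r | t.1.sum + t.2.1.sum + t.2.2.sum = n} := by
    ext t
    simp only [Set.mem_union, Set.mem_setOf_eq, Type4b, Type3b, USet]
    constructor
    · rintro (⟨⟨p1, p2, p3, p4, p5, p6, p7, p8, p9, p10⟩, hs⟩ |
        ⟨⟨q1, q2, q3, q4, q5, q6, q7, q8⟩, hs⟩)
      · exact ⟨⟨p1, p2, p4, p5, p7, p8, p9, by omega⟩, hs⟩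
      · refine ⟨⟨q1, q2, q4, q5, ?_, q7, q8, ?_⟩, hs⟩
        · rw [q6]; exact memB_nil r
        · rw [q6]; simp
    · rintro ⟨⟨u1, u2, u3, u4, u5, u6, u7, u8⟩, hs⟩
      by_cases hg : t.2.2 = []
      · refine Or.inr ⟨⟨u1, u2, ?_, u3, u4, hg, u6, u7⟩, hs⟩
        rw [hg]; exact isPtn_nil
      · exact Or.inl ⟨⟨u1, u2, u5.1, u3, u4, hg, u5, u6, u7, by omega⟩, hs⟩
  rw [← hunion, Set.ncard_union_eq ?disj ?f1 ?f2]
  · push_cast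
    ring
  case disj =>
    rw [Set.disjoint_left]
    rintro t ⟨h4, -⟩ ⟨h3, -⟩
    exact h4.2.2.2.2.2.1 h3.2.2.2.2.2.1
  case f1 =>
    refine (finite_triple_slice n).subset ?_
    rintro t ⟨h4, hs⟩
    exact ⟨⟨h4.1, h4.2.1, h4.2.2.1⟩, hs⟩
  case f2 =>
    refine (finite_triple_slice n).subset ?_
    rintro t ⟨h3, hs⟩
    exact ⟨⟨h3.1, h3.2.1, h3.2.2.1⟩, hs⟩

lemma step2 (r : ℕ) (hr : 2 ≤ r) :
    cser (fun t : List ℕ × List ℕ × List ℕ => t.1.sum + t.2.1.sum + t.2.2.sum) (USet r)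
      = seriesSum fun ℓ =>
          cser (fun p : List ℕ × List ℕ => p.1.sum + p.2.sum) (PairSet (r + ℓ))
            * cser List.sum (GSet r ℓ) := by
  ext n
  rw [seriesSum, coeff_mk, cser, coeff_mk]
  beta_reduce
  have hcoeff : ∀ ℓ : ℕ,
      PowerSeries.coeff n (cser (fun p : List ℕ × List ℕ => p.1.sum + p.2.sum)
          (PairSet (r + ℓ)) * cser List.sum (GSet r ℓ))
      = ({q ∈ PairSet (r + ℓ) ×ˢ GSet r ℓ |
          q.1.1.sum + q.1.2.sum + q.2.sum = n}.ncard : ℚ) := by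
    intro ℓ
    rw [conv _ _ _ _ (fun m => finite_pair_slice (fun p hp => ⟨hp.1, hp.2.1⟩) m)
      (fun m => finite_sub (fun l hl => hl.1.1) m), cser, coeff_mk]
  have key : {x : List ℕ × List ℕ × List ℕ |
        x ∈ USet r ∧ x.1.sum + x.2.1.sum + x.2.2.sum = n}.ncard
      = ∑ ℓ ∈ Finset.range (n + 1), {q ∈ PairSet (r + ℓ) ×ˢ GSet r ℓ |
          q.1.1.sum + q.1.2.sum + q.2.sum = n}.ncard := by
    have hU : {x : List ℕ × List ℕ × List ℕ |
          x ∈ USet r ∧ x.1.sum + x.2.1.sum + x.2.2.sum = n}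
        = ⋃ ℓ ∈ Finset.range (n + 1),
            {x ∈ USetL r ℓ | x.1.sum + x.2.1.sum + x.2.2.sum = n} := by
      ext t
      simp only [Set.mem_setOf_eq, Set.mem_iUnion, USetL, Finset.mem_range]
      constructor
      · rintro ⟨ht, hs⟩
        obtain ⟨u1, u2, u3, u4, u5, u6, u7, u8⟩ := ht
        have hk1 : 1 ≤ Kpart t.1 := kpart_pos u1 u3
        have hkb : Kpart t.1 ≤ t.1.sum := le_sum_mem (kpart_mem u3)
        have hib : Ikpart t.2.1 (Kpart t.1) ≤ t.2.1.sum := le_sum_mem (ikpart_mem hk1 u6)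
        refine ⟨Kpart t.1 + Ikpart t.2.1 (Kpart t.1) - r, by omega,
          ⟨⟨u1, u2, u3, u4, u5, u6, u7, u8⟩, by omega⟩, hs⟩
      · rintro ⟨ℓ, hln, ⟨hU', hki⟩, hs⟩
        exact ⟨hU', hs⟩
    rw [hU, ncard_biUnion _ _ (fun ℓ _ => (finite_triple_slice n).subset (by
        rintro t ⟨⟨⟨u1, u2, u3, u4, u5, u6, u7, u8⟩, hki⟩, hs⟩
        exact ⟨⟨u1, u2, u5.1⟩, hs⟩))
      (fun i hi j' hj' hij => by
        rw [Set.disjoint_left]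
        rintro t ⟨⟨-, hki⟩, -⟩ ⟨⟨-, hkj⟩, -⟩
        exact hij (by omega))]
    refine Finset.sum_congr rfl fun ℓ hl => ?_
    have hinj : Set.InjOn (fun t : List ℕ × List ℕ × List ℕ => ((t.1, t.2.1), t.2.2))
        {x ∈ USetL r ℓ | x.1.sum + x.2.1.sum + x.2.2.sum = n} := by
      rintro ⟨a1, b1, c1⟩ h1 ⟨a2, b2, c2⟩ h2 he
      simp only [Prod.mk.injEq] at he
      simp only [Prod.mk.injEq]
      exact ⟨he.1.1, he.1.2, he.2⟩
    have himg : (fun t : List ℕ × List ℕ × List ℕ => ((t.1, t.2.1), t.2.2)) ''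
        {x ∈ USetL r ℓ | x.1.sum + x.2.1.sum + x.2.2.sum = n}
        = {q ∈ PairSet (r + ℓ) ×ˢ GSet r ℓ | q.1.1.sum + q.1.2.sum + q.2.sum = n} := by
      ext q
      simp only [Set.mem_image, Set.mem_setOf_eq, Set.mem_prod, USetL, PairSet, GSet, USet]
      constructor
      · rintro ⟨t, ⟨⟨⟨u1, u2, u3, u4, u5, u6, u7, u8⟩, hki⟩, hs⟩, rfl⟩
        dsimp only
        exact ⟨⟨⟨u1, u2, u3, u4, u6, hki⟩, u5, by omega⟩, by omega⟩
      · rintro ⟨⟨⟨p1, p2, p3, p4, p5, p6⟩, hg1, hg2⟩, hs⟩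
        refine ⟨(q.1.1, q.1.2, q.2), ⟨⟨⟨p1, p2, p3, p4, hg1, p5, by dsimp only; omega,
          by dsimp only; omega⟩, p6⟩, by dsimp only; omega⟩, by simp⟩
    rw [← himg, Set.ncard_image_of_injOn hinj]
  rw [key]
  push_cast
  refine Finset.sum_congr rfl fun ℓ _ => ?_
  exact (hcoeff ℓ).symm

lemma qPoch_one : qPoch 1 = 1 - X := by
  rw [qPoch, Finset.prod_range_one, pow_one]

end AGAux


/-- `S_{4,b} + S_{3,b} = (H²/(q)_1) · Σ_{ℓ≥0} q^{r+ℓ} (q)_{r+ℓ−1} G_{r,ℓ}`. -/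
theorem S4b_add_S3b (r : ℕ) (hr : 2 ≤ r) :
    cseries (Type4b r) + cseries (Type3b r)
      = Hq ^ 2 * (qPoch 1)⁻¹ *
          seriesSum (fun ℓ => (X : PowerSeries ℚ) ^ (r + ℓ) * qPoch (r + ℓ - 1) *
            PowerSeries.mk fun n => (Gcount r ℓ n : ℚ)) := by
  rw [AGAux.step1 r hr, AGAux.step2 r hr,
    AGAux.mul_seriesSum (Hq ^ 2 * (qPoch 1)⁻¹)
      (fun ℓ => X ^ (r + ℓ) * qPoch (r + ℓ - 1) * PowerSeries.mk fun n => (Gcount r ℓ n : ℚ))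
      (fun k m hm => by
        show (PowerSeries.coeff m) (X ^ (r + k) * qPoch (r + k - 1) *
          PowerSeries.mk fun n => (Gcount r k n : ℚ)) = 0
        rw [mul_assoc, PowerSeries.coeff_X_pow_mul', if_neg (by omega)])]
  refine congrArg seriesSum (funext fun ℓ => ?_)
  rw [AGAux.gser_eq r ℓ]
  have hkey := AGAux.pairKey (r + ℓ) (by omega)
  have hne : PowerSeries.constantCoeff (1 - X : PowerSeries ℚ) ≠ 0 := by
    simp
  have hunit : (1 - X : PowerSeries ℚ) * (1 - X)⁻¹ = 1 := PowerSeries.mul_inv_cancel _ hne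
  have hone : qPoch 1 = 1 - X := AGAux.qPoch_one
  have hsolve : AGAux.cser (fun p : List ℕ × List ℕ => p.1.sum + p.2.sum)
      (AGAux.PairSet (r + ℓ))
      = Hq ^ 2 * (qPoch 1)⁻¹ * (X ^ (r + ℓ) * qPoch (r + ℓ - 1)) := by
    calc AGAux.cser (fun p : List ℕ × List ℕ => p.1.sum + p.2.sum) (AGAux.PairSet (r + ℓ))
        = AGAux.cser (fun p : List ℕ × List ℕ => p.1.sum + p.2.sum) (AGAux.PairSet (r + ℓ))
            * ((1 - X) * (1 - X)⁻¹) := by rw [hunit, mul_one]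
      _ = X ^ (r + ℓ) * Hq ^ 2 * qPoch (r + ℓ - 1) * (1 - X)⁻¹ := by
            rw [← mul_assoc, hkey]
      _ = Hq ^ 2 * (qPoch 1)⁻¹ * (X ^ (r + ℓ) * qPoch (r + ℓ - 1)) := by
            rw [hone]; ring
  rw [hsolve]
  ring
end
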